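/- arXiv:1701.08417 — 3 statements merged into one kernel-verified Lean document; each statement's English description precedes it below -/
import Mathlib

section
/- Every αh-perfect graph is perfect; that is, if for every induced subgraph H of G the achromatic number of H equals the Hadwiger number of H, then for every induced subgraph H of G the chromatic number of H equals the clique number of H. -/
set_option maxRecDepth 10000
set_option maxHeartbeats 1000000
set_option linter.unreachableTactic false
set_option linter.unusedTactic false


open SimpleGraph

/-- A `k`-coloring `c` of `G` is *complete* if it is surjective and for every pair of distinct
colors there is an edge of `G` whose endpoints receive those two colors. -/
def IsCompleteColoring {V : Type*} (G : SimpleGraph V) {k : ℕ} (c : V → Fin k) : Prop :=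
  Function.Surjective c ∧
    ∀ i j : Fin k, i ≠ j → ∃ u v : V, G.Adj u v ∧ c u = i ∧ c v = j

/-- A coloring is *proper* if adjacent vertices receive distinct colors. -/
def IsProperColoring {V : Type*} (G : SimpleGraph V) {k : ℕ} (c : V → Fin k) : Prop :=
  ∀ u v : V, G.Adj u v → c u ≠ c v

/-- A `k`-coloring `c` of `G` is *dominating* if it is surjective and every color class contains
a vertex having a neighbor in every other color class. -/
def IsDominatingColoring {V : Type*} (G : SimpleGraph V) {k : ℕ} (c : V → Fin k) : Prop :=
  Function.Surjective c ∧
    ∀ i : Fin k, ∃ v : V, c v = i ∧ ∀ j : Fin k, j ≠ i → ∃ u : V, G.Adj v u ∧ c u = j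

/-- A `k`-coloring `c` of `G` is *pseudo-Grundy* if it is surjective and every vertex is
adjacent to at least one vertex of each smaller color. -/
def IsPseudoGrundyColoring {V : Type*} (G : SimpleGraph V) {k : ℕ} (c : V → Fin k) : Prop :=
  Function.Surjective c ∧
    ∀ v : V, ∀ j : Fin k, j < c v → ∃ u : V, G.Adj v u ∧ c u = j

/-- The pseudoachromatic number `ψ(G)`: the largest `k` admitting a complete `k`-coloring. -/
noncomputable def pseudoachromaticNumber {V : Type*} (G : SimpleGraph V) : ℕ :=
  sSup {k | ∃ c : V → Fin k, IsCompleteColoring G c}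

/-- The achromatic number `α(G)`: the largest `k` admitting a proper complete `k`-coloring. -/
noncomputable def achromaticNumber {V : Type*} (G : SimpleGraph V) : ℕ :=
  sSup {k | ∃ c : V → Fin k, IsProperColoring G c ∧ IsCompleteColoring G c}

/-- The b-chromatic number `b(G)`: the largest `k` admitting a proper dominating `k`-coloring. -/
noncomputable def bChromaticNumber {V : Type*} (G : SimpleGraph V) : ℕ :=
  sSup {k | ∃ c : V → Fin k, IsProperColoring G c ∧ IsDominatingColoring G c}

/-- The pseudo-b-chromatic number `B(G)`: the largest `k` admitting a dominating `k`-coloring. -/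
noncomputable def pseudoBChromaticNumber {V : Type*} (G : SimpleGraph V) : ℕ :=
  sSup {k | ∃ c : V → Fin k, IsDominatingColoring G c}

/-- The Grundy number `Γ(G)`: the largest `k` admitting a proper pseudo-Grundy `k`-coloring. -/
noncomputable def grundyNumber {V : Type*} (G : SimpleGraph V) : ℕ :=
  sSup {k | ∃ c : V → Fin k, IsProperColoring G c ∧ IsPseudoGrundyColoring G c}

/-- The pseudo-Grundy number `γ(G)`: the largest `k` admitting a pseudo-Grundy `k`-coloring. -/
noncomputable def pseudoGrundyNumber {V : Type*} (G : SimpleGraph V) : ℕ :=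
  sSup {k | ∃ c : V → Fin k, IsPseudoGrundyColoring G c}

/-- `G` contains the complete graph `K_k` as a minor: there are `k` pairwise disjoint
"branch sets", each inducing a connected (nonempty) subgraph, with an edge of `G` between
every two of them. -/
def HasCompleteMinor {V : Type*} (G : SimpleGraph V) (k : ℕ) : Prop :=
  ∃ B : Fin k → Set V,
    (∀ i, (G.induce (B i)).Connected) ∧
    (∀ i j : Fin k, i ≠ j → Disjoint (B i) (B j)) ∧
    (∀ i j : Fin k, i ≠ j → ∃ u ∈ B i, ∃ v ∈ B j, G.Adj u v)

/-- The Hadwiger number `h(G)`: the largest `k` such that `K_k` is a minor of `G`. -/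
noncomputable def hadwigerNumber {V : Type*} (G : SimpleGraph V) : ℕ :=
  sSup {k | HasCompleteMinor G k}

/-- `G` has an induced subgraph isomorphic to `H`. -/
def HasInducedCopy {V : Type*} {W : Type*} (G : SimpleGraph V) (H : SimpleGraph W) : Prop :=
  ∃ s : Set V, Nonempty (G.induce s ≃g H)

/-- A graph is *chordal* if it has no induced cycle on four or more vertices. -/
def IsChordal {V : Type*} (G : SimpleGraph V) : Prop :=
  ∀ n : ℕ, 4 ≤ n → ¬ HasInducedCopy G (cycleGraph n)

/-- The diamond graph `D`: `K₄` minus one edge. -/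
def diamondGraph : SimpleGraph (Fin 4) :=
  (⊤ : SimpleGraph (Fin 4)).deleteEdges {s(0, 1)}

section AuxPerfect

variable {V : Type*} {W : Type*}

/-- Concrete path on 4 vertices. -/
def P4c : SimpleGraph (Fin 4) where
  Adj a b := a.val + 1 = b.val ∨ b.val + 1 = a.val
  symm := by constructor; intro a b h; tauto
  loopless := by constructor; intro a h; omega

instance : DecidableRel P4c.Adj := fun a b =>
  inferInstanceAs (Decidable (a.val + 1 = b.val ∨ b.val + 1 = a.val))

/-- Concrete cycle on 4 vertices. -/
def C4c : SimpleGraph (Fin 4) where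
  Adj a b := (a.val + 1) % 4 = b.val ∨ (b.val + 1) % 4 = a.val
  symm := by constructor; intro a b h; tauto
  loopless := by constructor; intro a h; omega

instance : DecidableRel C4c.Adj := fun a b =>
  inferInstanceAs (Decidable ((a.val + 1) % 4 = b.val ∨ (b.val + 1) % 4 = a.val))

/-- Decidability of connectivity (kernel-reducible version). -/
def decConn [Fintype V] [DecidableEq V] (G : SimpleGraph V)
    [DecidableRel G.Adj] : Decidable G.Connected :=
  haveI : Decidable (Nonempty V) := decidable_of_iff _ Finset.univ_nonempty_iff
  decidable_of_iff' _ (connected_iff G)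

attribute [local instance] decConn

lemma IsCompleteColoring.k_le_card [Fintype V] {G : SimpleGraph V} {k : ℕ} {c : V → Fin k}
    (hc : IsCompleteColoring G c) : k ≤ Fintype.card V := by
  simpa using Fintype.card_le_of_surjective c hc.1

lemma HasCompleteMinor.le_card [Fintype V] {G : SimpleGraph V} {k : ℕ}
    (h : HasCompleteMinor G k) : k ≤ Fintype.card V := by
  obtain ⟨B, hconn, hdisj, -⟩ := h
  have hne : ∀ i, ∃ v, v ∈ B i := by
    intro i
    obtain ⟨⟨v, hv⟩⟩ := (hconn i).nonempty
    exact ⟨v, hv⟩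
  choose f hf using hne
  have hinj : Function.Injective f := by
    intro i j hij
    by_contra hne'
    exact Set.disjoint_left.mp (hdisj i j hne') (hf i) (hij ▸ hf j)
  simpa using Fintype.card_le_of_injective f hinj

lemma achromatic_set_mono {G : SimpleGraph V} {H : SimpleGraph W} (e : G ≃g H) {k : ℕ}
    (hc : ∃ c : V → Fin k, IsProperColoring G c ∧ IsCompleteColoring G c) :
    ∃ c : W → Fin k, IsProperColoring H c ∧ IsCompleteColoring H c := by
  obtain ⟨c, hp, hsurj, hcomp⟩ := hc
  refine ⟨c ∘ e.symm, fun u v huv => hp _ _ (e.symm.map_adj_iff.mpr huv),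
    hsurj.comp e.symm.toEquiv.surjective, fun i j hij => ?_⟩
  obtain ⟨u, v, huv, hcu, hcv⟩ := hcomp i j hij
  exact ⟨e u, e v, e.map_adj_iff.mpr huv, by simpa using hcu, by simpa using hcv⟩

lemma achromaticNumber_congr {G : SimpleGraph V} {H : SimpleGraph W} (e : G ≃g H) :
    achromaticNumber G = achromaticNumber H := by
  unfold achromaticNumber
  congr 1
  ext k
  exact ⟨achromatic_set_mono e, achromatic_set_mono e.symm⟩

lemma hasCompleteMinor_mono {G : SimpleGraph V} {H : SimpleGraph W} (e : G ≃g H) {k : ℕ}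
    (h : HasCompleteMinor G k) : HasCompleteMinor H k := by
  obtain ⟨B, hconn, hdisj, hcross⟩ := h
  refine ⟨fun i => e '' B i, fun i => ?_, fun i j hij => ?_, fun i j hij => ?_⟩
  · have hmap : Set.MapsTo e (B i) (e '' B i) := Set.mapsTo_image _ _
    refine (hconn i).map (induceHom e.toHom hmap) ?_
    rintro ⟨w, x, hx, rfl⟩
    exact ⟨⟨x, hx⟩, rfl⟩
  · exact (Set.disjoint_image_iff e.injective).mpr (hdisj i j hij)
  · obtain ⟨u, hu, v, hv, huv⟩ := hcross i j hij
    exact ⟨e u, ⟨u, hu, rfl⟩, e v, ⟨v, hv, rfl⟩, e.map_adj_iff.mpr huv⟩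

lemma hadwigerNumber_congr {G : SimpleGraph V} {H : SimpleGraph W} (e : G ≃g H) :
    hadwigerNumber G = hadwigerNumber H := by
  unfold hadwigerNumber
  congr 1
  ext k
  exact ⟨hasCompleteMinor_mono e, hasCompleteMinor_mono e.symm⟩

end AuxPerfect

section AuxPerfect2

variable {V : Type*}

attribute [local instance] decConn

lemma connected_induce_singleton (G : SimpleGraph V) (a : V) :
    (G.induce {a}).Connected := by
  rw [induce_singleton_eq_top]
  haveI : Nonempty ({a} : Set V) := ⟨⟨a, rfl⟩⟩
  exact connected_top

lemma connected_induce_pair (G : SimpleGraph V) {a b : V} (hab : G.Adj a b) :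
    (G.induce {a, b}).Connected := by
  refine (connected_iff_exists_forall_reachable _).mpr ⟨⟨a, by simp⟩, ?_⟩
  rintro ⟨w, hw⟩
  rcases hw with rfl | rfl
  · rfl
  · exact Adj.reachable (by simp [hab])

set_option synthInstance.maxHeartbeats 400000 in
set_option synthInstance.maxSize 2000 in
/-- P4 has no K3 minor. -/
lemma p4c_minor_le : ∀ k : ℕ, HasCompleteMinor P4c k → k ≤ 2 := by
  have master : ∀ b0 b1 b2 : Finset (Fin 4),
      ¬ (Disjoint b0 b1 ∧ Disjoint b0 b2 ∧ Disjoint b1 b2 ∧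
        (∃ u ∈ b0, ∃ v ∈ b1, P4c.Adj u v) ∧ (∃ u ∈ b0, ∃ v ∈ b2, P4c.Adj u v) ∧
        (∃ u ∈ b1, ∃ v ∈ b2, P4c.Adj u v) ∧
        (P4c.induce (↑b0 : Set (Fin 4))).Connected ∧
        (P4c.induce (↑b1 : Set (Fin 4))).Connected ∧
        (P4c.induce (↑b2 : Set (Fin 4))).Connected) := by decide
  intro k hk
  by_contra hk2
  push_neg at hk2
  obtain ⟨B, hconn, hdisj, hcross⟩ := hk
  have h3 : 3 ≤ k := hk2
  set i0 : Fin k := ⟨0, by omega⟩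
  set i1 : Fin k := ⟨1, by omega⟩
  set i2 : Fin k := ⟨2, by omega⟩
  have h01 : i0 ≠ i1 := by simp [i0, i1, Fin.ext_iff]
  have h02 : i0 ≠ i2 := by simp [i0, i2, Fin.ext_iff]
  have h12 : i1 ≠ i2 := by simp [i1, i2, Fin.ext_iff]
  have fin0 := Set.toFinite (B i0)
  have fin1 := Set.toFinite (B i1)
  have fin2 := Set.toFinite (B i2)
  apply master fin0.toFinset fin1.toFinset fin2.toFinset
  refine ⟨?_, ?_, ?_, ?_, ?_, ?_, ?_, ?_, ?_⟩
  · rw [Finset.disjoint_left]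
    intro a ha hb
    exact Set.disjoint_left.mp (hdisj i0 i1 h01) (fin0.mem_toFinset.mp ha)
      (fin1.mem_toFinset.mp hb)
  · rw [Finset.disjoint_left]
    intro a ha hb
    exact Set.disjoint_left.mp (hdisj i0 i2 h02) (fin0.mem_toFinset.mp ha)
      (fin2.mem_toFinset.mp hb)
  · rw [Finset.disjoint_left]
    intro a ha hb
    exact Set.disjoint_left.mp (hdisj i1 i2 h12) (fin1.mem_toFinset.mp ha)
      (fin2.mem_toFinset.mp hb)
  · obtain ⟨u, hu, v, hv, huv⟩ := hcross i0 i1 h01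
    exact ⟨u, fin0.mem_toFinset.mpr hu, v, fin1.mem_toFinset.mpr hv, huv⟩
  · obtain ⟨u, hu, v, hv, huv⟩ := hcross i0 i2 h02
    exact ⟨u, fin0.mem_toFinset.mpr hu, v, fin2.mem_toFinset.mpr hv, huv⟩
  · obtain ⟨u, hu, v, hv, huv⟩ := hcross i1 i2 h12
    exact ⟨u, fin1.mem_toFinset.mpr hu, v, fin2.mem_toFinset.mpr hv, huv⟩
  · rw [Set.Finite.coe_toFinset]; exact hconn i0
  · rw [Set.Finite.coe_toFinset]; exact hconn i1
  · rw [Set.Finite.coe_toFinset]; exact hconn i2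

/-- P4 has a proper complete 3-coloring. -/
lemma p4c_coloring : ∃ c : Fin 4 → Fin 3, IsProperColoring P4c c ∧ IsCompleteColoring P4c c := by
  have : ∃ c : Fin 4 → Fin 3, (∀ u v : Fin 4, P4c.Adj u v → c u ≠ c v) ∧
      (Function.Surjective c ∧
        ∀ i j : Fin 3, i ≠ j → ∃ u v : Fin 4, P4c.Adj u v ∧ c u = i ∧ c v = j) := by decide
  obtain ⟨c, h1, h2⟩ := this
  exact ⟨c, h1, h2⟩

/-- C4 has no proper complete coloring with 3 or more colors. -/
lemma c4c_coloring_le : ∀ k : ℕ,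
    (∃ c : Fin 4 → Fin k, IsProperColoring C4c c ∧ IsCompleteColoring C4c c) → k ≤ 2 := by
  intro k hc
  by_contra hk2
  push_neg at hk2
  have h3 : 3 ≤ k := hk2
  have h4 : k ≤ 4 := by simpa using hc.choose_spec.2.k_le_card
  interval_cases k
  · have : ¬ ∃ c : Fin 4 → Fin 3, (∀ u v : Fin 4, C4c.Adj u v → c u ≠ c v) ∧
        (Function.Surjective c ∧
          ∀ i j : Fin 3, i ≠ j → ∃ u v : Fin 4, C4c.Adj u v ∧ c u = i ∧ c v = j) := by decide
    obtain ⟨c, h1, h2⟩ := hc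
    exact this ⟨c, h1, h2⟩
  · have : ¬ ∃ c : Fin 4 → Fin 4, (∀ u v : Fin 4, C4c.Adj u v → c u ≠ c v) ∧
        (Function.Surjective c ∧
          ∀ i j : Fin 4, i ≠ j → ∃ u v : Fin 4, C4c.Adj u v ∧ c u = i ∧ c v = j) := by decide
    obtain ⟨c, h1, h2⟩ := hc
    exact this ⟨c, h1, h2⟩

/-- C4 has a K3 minor. -/
lemma c4c_minor3 : HasCompleteMinor C4c 3 := by
  refine ⟨![{0, 1}, {2}, {3}], ?_, ?_, ?_⟩
  · intro i
    fin_cases i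
    · exact connected_induce_pair C4c (by decide)
    · exact connected_induce_singleton C4c 2
    · exact connected_induce_singleton C4c 3
  · intro i j hij
    fin_cases i <;> fin_cases j <;>
      simp_all [Set.disjoint_left] <;> omega
  · intro i j hij
    fin_cases i <;> fin_cases j <;> simp_all <;> decide

lemma achromatic_ne_hadwiger_P4c : achromaticNumber P4c ≠ hadwigerNumber P4c := by
  have h1 : 3 ≤ achromaticNumber P4c := by
    apply le_csSup
    · exact ⟨4, fun k hk => by simpa using hk.choose_spec.2.k_le_card⟩
    · exact p4c_coloring
  have h2 : hadwigerNumber P4c ≤ 2 := csSup_le' p4c_minor_le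
  omega

lemma achromatic_ne_hadwiger_C4c : achromaticNumber C4c ≠ hadwigerNumber C4c := by
  have h1 : 3 ≤ hadwigerNumber C4c := by
    apply le_csSup
    · exact ⟨4, fun k hk => by simpa using HasCompleteMinor.le_card hk⟩
    · exact c4c_minor3
  have h2 : achromaticNumber C4c ≤ 2 := csSup_le' c4c_coloring_le
  omega

end AuxPerfect2

section AuxPerfect3

variable {V : Type*}

lemma p4_contra (G : SimpleGraph V) {x u v y : V}
    (hxu : G.Adj x u) (huv : G.Adj u v) (hvy : G.Adj v y)
    (hxv : ¬ G.Adj x v) (hxy : ¬ G.Adj x y) (huy : ¬ G.Adj u y)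
    (hxv' : x ≠ v) (hxy' : x ≠ y) (huy' : u ≠ y)
    (heq : achromaticNumber (G.induce {x, u, v, y}) = hadwigerNumber (G.induce {x, u, v, y})) :
    False := by
  have hux : G.Adj u x := hxu.symm
  have hvu : G.Adj v u := huv.symm
  have hyv : G.Adj y v := hvy.symm
  have hvx : ¬ G.Adj v x := fun hh => hxv hh.symm
  have hyx2 : ¬ G.Adj y x := fun hh => hxy hh.symm
  have hyu : ¬ G.Adj y u := fun hh => huy hh.symm
  set s : Set V := {x, u, v, y} with hs
  have hx : x ∈ s := by simp [hs]
  have hu : u ∈ s := by simp [hs]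
  have hv : v ∈ s := by simp [hs]
  have hy : y ∈ s := by simp [hs]
  let f : Fin 4 → ↥s := ![⟨x, hx⟩, ⟨u, hu⟩, ⟨v, hv⟩, ⟨y, hy⟩]
  have hbij : Function.Bijective f := by
    constructor
    · intro i j hij
      have hval := congrArg Subtype.val hij
      fin_cases i <;> fin_cases j <;> simp_all [f] <;>
        first
          | rfl
          | exact absurd hval hxu.ne
          | exact absurd hval hxu.ne'
          | exact absurd hval huv.ne
          | exact absurd hval huv.ne'
          | exact absurd hval hvy.ne
          | exact absurd hval hvy.ne'
          | exact absurd hval hxv'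
          | exact absurd hval hxv'.symm
          | exact absurd hval hxy'
          | exact absurd hval hxy'.symm
          | exact absurd hval huy'
          | exact absurd hval huy'.symm
    · rintro ⟨w, hw⟩
      rcases hw with rfl | rfl | rfl | rfl
      · exact ⟨0, rfl⟩
      · exact ⟨1, rfl⟩
      · exact ⟨2, rfl⟩
      · exact ⟨3, rfl⟩
  have e : P4c ≃g G.induce s := by
    refine ⟨Equiv.ofBijective f hbij, ?_⟩
    intro i j
    show (G.induce s).Adj (f i) (f j) ↔ P4c.Adj i j
    fin_cases i <;> fin_cases j <;> simp_all [f, P4c, comap_adj] <;> decide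
  exact achromatic_ne_hadwiger_P4c
    ((achromaticNumber_congr e).trans (heq.trans (hadwigerNumber_congr e).symm))

lemma c4_contra (G : SimpleGraph V) {x u v y : V}
    (hxu : G.Adj x u) (huv : G.Adj u v) (hvy : G.Adj v y) (hyx : G.Adj y x)
    (hxv : ¬ G.Adj x v) (huy : ¬ G.Adj u y)
    (hxv' : x ≠ v) (huy' : u ≠ y)
    (heq : achromaticNumber (G.induce {x, u, v, y}) = hadwigerNumber (G.induce {x, u, v, y})) :
    False := by
  have hux : G.Adj u x := hxu.symm
  have hvu : G.Adj v u := huv.symm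
  have hyv : G.Adj y v := hvy.symm
  have hxy2 : G.Adj x y := hyx.symm
  have hvx : ¬ G.Adj v x := fun hh => hxv hh.symm
  have hyu : ¬ G.Adj y u := fun hh => huy hh.symm
  set s : Set V := {x, u, v, y} with hs
  have hx : x ∈ s := by simp [hs]
  have hu : u ∈ s := by simp [hs]
  have hv : v ∈ s := by simp [hs]
  have hy : y ∈ s := by simp [hs]
  let f : Fin 4 → ↥s := ![⟨x, hx⟩, ⟨u, hu⟩, ⟨v, hv⟩, ⟨y, hy⟩]
  have hbij : Function.Bijective f := by
    constructor
    · intro i j hij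
      have hval := congrArg Subtype.val hij
      fin_cases i <;> fin_cases j <;> simp_all [f] <;>
        first
          | rfl
          | exact absurd hval hxu.ne
          | exact absurd hval hxu.ne'
          | exact absurd hval huv.ne
          | exact absurd hval huv.ne'
          | exact absurd hval hvy.ne
          | exact absurd hval hvy.ne'
          | exact absurd hval hyx.ne
          | exact absurd hval hyx.ne'
          | exact absurd hval hxv'
          | exact absurd hval hxv'.symm
          | exact absurd hval huy'
          | exact absurd hval huy'.symm
    · rintro ⟨w, hw⟩
      rcases hw with rfl | rfl | rfl | rfl
      · exact ⟨0, rfl⟩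
      · exact ⟨1, rfl⟩
      · exact ⟨2, rfl⟩
      · exact ⟨3, rfl⟩
  have e : C4c ≃g G.induce s := by
    refine ⟨Equiv.ofBijective f hbij, ?_⟩
    intro i j
    show (G.induce s).Adj (f i) (f j) ↔ C4c.Adj i j
    fin_cases i <;> fin_cases j <;> simp_all [f, C4c, comap_adj] <;> decide
  exact achromatic_ne_hadwiger_C4c
    ((achromaticNumber_congr e).trans (heq.trans (hadwigerNumber_congr e).symm))

/-- Closed neighborhoods are nested along every edge. -/
def NbhdNested (G : SimpleGraph V) : Prop :=
  ∀ a b : V, G.Adj a b →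
    (∀ z, G.Adj a z → z = b ∨ G.Adj b z) ∨ (∀ z, G.Adj b z → z = a ∨ G.Adj a z)

lemma nested_induce_of_h (G : SimpleGraph V)
    (h : ∀ s : Set V, achromaticNumber (G.induce s) = hadwigerNumber (G.induce s))
    (s : Set V) : NbhdNested (G.induce s) := by
  intro a b hab
  by_contra hcon
  push_neg at hcon
  obtain ⟨⟨p, hap, hpb, hbp⟩, ⟨q, hbq, hqa, haq⟩⟩ := hcon
  -- transfer to G
  have Hab : G.Adj a.1 b.1 := hab
  have Hap : G.Adj a.1 p.1 := hap
  have Hbq : G.Adj b.1 q.1 := hbq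
  have Hbp : ¬ G.Adj b.1 p.1 := hbp
  have Haq : ¬ G.Adj a.1 q.1 := haq
  have hpb' : p.1 ≠ b.1 := fun hh => hpb (Subtype.ext hh)
  have hqa' : q.1 ≠ a.1 := fun hh => hqa (Subtype.ext hh)
  have hpq' : p.1 ≠ q.1 := by
    intro hh
    exact Haq (hh ▸ Hap)
  by_cases hpq : G.Adj p.1 q.1
  · -- C4 : p - a - b - q - p
    exact c4_contra G Hap.symm Hab Hbq (G.adj_symm hpq) (fun hh => Hbp (G.adj_symm hh)) Haq
      hpb' (fun hh => hqa' hh.symm) (h _)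
  · -- P4 : p - a - b - q
    exact p4_contra G Hap.symm Hab Hbq (fun hh => Hbp (G.adj_symm hh)) hpq Haq
      hpb' hpq' (fun hh => hqa' hh.symm) (h _)

end AuxPerfect3

section AuxPerfect4

variable {V : Type*}

lemma exists_simplicial [Fintype V] [Nonempty V] (G : SimpleGraph V) (hn : NbhdNested G) :
    ∃ v : V, ∀ a b : V, G.Adj v a → G.Adj v b → a ≠ b → G.Adj a b := by
  classical
  obtain ⟨v, -, hmin⟩ := Finset.exists_min_image Finset.univ
    (fun w => (G.neighborSet w).ncard) Finset.univ_nonempty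
  refine ⟨v, fun a b hva hvb hab => ?_⟩
  rcases hn v a hva with h1 | h2
  · rcases h1 b hvb with rfl | hh
    · exact absurd rfl hab
    · exact hh
  · by_contra hnab
    have hsub : G.neighborSet a ⊆ (G.neighborSet v \ {a, b}) ∪ {v} := by
      intro z hz
      rcases h2 z hz with rfl | hvz
      · exact Or.inr rfl
      · refine Or.inl ⟨hvz, ?_⟩
        simp only [Set.mem_insert_iff, Set.mem_singleton_iff]
        rintro (rfl | rfl)
        · exact G.irrefl hz
        · exact hnab hz
    have hab' : ({a, b} : Set V) ⊆ G.neighborSet v := by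
      rintro z (rfl | rfl)
      · exact hva
      · exact hvb
    have hcard2 : ({a, b} : Set V).ncard = 2 := Set.ncard_pair hab
    have h1 : (G.neighborSet a).ncard ≤ ((G.neighborSet v \ {a, b}) ∪ {v}).ncard :=
      Set.ncard_le_ncard hsub (Set.toFinite _)
    have h2' : ((G.neighborSet v \ {a, b}) ∪ {v}).ncard ≤
        (G.neighborSet v \ {a, b}).ncard + 1 := by
      simpa using Set.ncard_union_le (G.neighborSet v \ {a, b}) {v}
    have h3 : (G.neighborSet v \ {a, b}).ncard = (G.neighborSet v).ncard - 2 := by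
      rw [Set.ncard_diff hab' (Set.toFinite _), hcard2]
    have h4 : 2 ≤ (G.neighborSet v).ncard := by
      simpa [hcard2] using Set.ncard_le_ncard hab' (Set.toFinite _)
    have h5 : (G.neighborSet v).ncard ≤ (G.neighborSet a).ncard := hmin a (Finset.mem_univ a)
    omega

lemma cliqueNum_comap_le [Fintype V] (G : SimpleGraph V) (p : V → Prop) [DecidablePred p] :
    (G.comap ((↑) : {w // p w} → V)).cliqueNum ≤ G.cliqueNum := by
  classical
  obtain ⟨t, ht⟩ := (G.comap ((↑) : {w // p w} → V)).exists_isNClique_cliqueNum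
  have hclique : G.IsClique (t.image Subtype.val) := by
    intro c hc d hd hcd
    simp only [Finset.coe_image, Set.mem_image, Finset.mem_coe] at hc hd
    obtain ⟨c', hc', rfl⟩ := hc
    obtain ⟨d', hd', rfl⟩ := hd
    exact ht.1 hc' hd' (fun hh => hcd (congrArg Subtype.val hh))
  have hcardim : (t.image Subtype.val).card = (G.comap ((↑) : {w // p w} → V)).cliqueNum := by
    rw [Finset.card_image_of_injective _ Subtype.val_injective, ht.2]
  calc (G.comap ((↑) : {w // p w} → V)).cliqueNum
      = (t.image Subtype.val).card := hcardim.symm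
    _ ≤ G.cliqueNum := IsClique.card_le_cliqueNum (tc := hclique)

lemma key_colorable : ∀ (n : ℕ) (W : Type u) [Fintype W] (G : SimpleGraph W),
    Fintype.card W = n → NbhdNested G → G.Colorable G.cliqueNum := by
  intro n
  induction n using Nat.strong_induction_on with
  | _ n ih =>
    intro W _ G hcard hnest
    classical
    rcases isEmpty_or_nonempty W with hW | hW
    · exact ⟨⟨fun w => isEmptyElim w, fun {a} => isEmptyElim a⟩⟩
    · obtain ⟨v, hsimp⟩ := exists_simplicial G hnest
      set W' := {w : W // ¬ (w = v)} with hW'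
      set G' : SimpleGraph W' := G.comap ((↑) : W' → W) with hG'
      have hcard' : Fintype.card W' = n - 1 := by
        rw [Fintype.card_subtype_compl, Fintype.card_subtype_eq, hcard]
      have hpos : 1 ≤ n := by
        rw [← hcard]
        exact Fintype.card_pos
      have hnest' : NbhdNested G' := by
        intro a b hab
        rcases hnest a.1 b.1 hab with h1 | h1
        · refine Or.inl fun z hz => ?_
          rcases h1 z.1 hz with hh | hh
          · exact Or.inl (Subtype.ext hh)
          · exact Or.inr hh
        · refine Or.inr fun z hz => ?_
          rcases h1 z.1 hz with hh | hh
          · exact Or.inl (Subtype.ext hh)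
          · exact Or.inr hh
      have hcol' : G'.Colorable G'.cliqueNum :=
        ih (n - 1) (by omega) W' G' hcard' hnest'
      have hclq : G'.cliqueNum ≤ G.cliqueNum := cliqueNum_comap_le G _
      obtain ⟨C⟩ := hcol'.mono hclq
      -- the closed neighborhood of v is a clique
      have hdeg : G.degree v + 1 ≤ G.cliqueNum := by
        have hclique : G.IsClique (↑(insert v (G.neighborFinset v)) : Set W) := by
          intro c hc d hd hcd
          simp only [Finset.coe_insert, Set.mem_insert_iff, Finset.mem_coe,
            mem_neighborFinset] at hc hd
          rcases hc with rfl | hc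
          · rcases hd with rfl | hd
            · exact absurd rfl hcd
            · exact hd
          · rcases hd with rfl | hd
            · exact hc.symm
            · exact hsimp _ _ hc hd hcd
        have hcardins : (insert v (G.neighborFinset v)).card = G.degree v + 1 := by
          rw [Finset.card_insert_of_notMem (by simp), card_neighborFinset_eq_degree]
        calc G.degree v + 1 = (insert v (G.neighborFinset v)).card := hcardins.symm
          _ ≤ G.cliqueNum := IsClique.card_le_cliqueNum (tc := hclique)
      -- find a free color for v
      set T : Finset (Fin G.cliqueNum) :=
        (G.neighborFinset v).attach.image
          (fun w => C ⟨w.1, fun hh => G.irrefl (hh ▸ ((mem_neighborFinset G v w.1).mp w.2))⟩)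
        with hT
      have hTcard : T.card < G.cliqueNum := by
        have h1 : T.card ≤ G.degree v := by
          calc T.card ≤ (G.neighborFinset v).attach.card := Finset.card_image_le
            _ = G.degree v := by rw [Finset.card_attach, card_neighborFinset_eq_degree]
        omega
      have hfree : ∃ i : Fin G.cliqueNum, i ∉ T := by
        have : (Tᶜ : Finset (Fin G.cliqueNum)).Nonempty := by
          rw [← Finset.card_pos, Finset.card_compl]
          simp only [Fintype.card_fin]
          omega
        obtain ⟨i, hi⟩ := this
        exact ⟨i, Finset.mem_compl.mp hi⟩
      obtain ⟨i, hi⟩ := hfree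
      refine ⟨⟨fun w => if hw : w = v then i else C ⟨w, hw⟩, ?_⟩⟩
      intro a b hab
      by_cases ha : a = v <;> by_cases hb : b = v
      · exact absurd (ha.trans hb.symm) hab.ne
      · simp only [dif_pos ha, dif_neg hb]
        intro hh
        apply hi
        rw [hT]
        have hvb : G.Adj v b := by rwa [ha] at hab
        have hbmem : b ∈ G.neighborFinset v := (mem_neighborFinset G v b).mpr hvb
        exact Finset.mem_image.mpr ⟨⟨b, hbmem⟩, Finset.mem_attach _ _, hh.symm⟩
      · simp only [dif_pos hb, dif_neg ha]
        intro hh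
        apply hi
        rw [hT]
        have hav : G.Adj a v := by rwa [hb] at hab
        have hamem : a ∈ G.neighborFinset v := (mem_neighborFinset G v a).mpr hav.symm
        exact Finset.mem_image.mpr ⟨⟨a, hamem⟩, Finset.mem_attach _ _, hh⟩
      · simp only [dif_neg ha, dif_neg hb]
        exact C.valid (show G'.Adj ⟨a, ha⟩ ⟨b, hb⟩ from hab)

end AuxPerfect4


/-- Every αh-perfect graph is perfect. -/
theorem achromatic_hadwiger_perfect_is_perfect {V : Type*} [Fintype V] (G : SimpleGraph V)
    (h : ∀ s : Set V, achromaticNumber (G.induce s) = hadwigerNumber (G.induce s)) :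
    ∀ s : Set V, (G.induce s).chromaticNumber = ((G.induce s).cliqueNum : ℕ∞) := by
  intro s
  classical
  haveI : Fintype ↥s := (Set.toFinite s).fintype
  have hnest := nested_induce_of_h G h s
  have hcol : (G.induce s).Colorable ((G.induce s).cliqueNum) :=
    key_colorable (Fintype.card ↥s) ↥s (G.induce s) rfl hnest
  apply le_antisymm
  · exact hcol.chromaticNumber_le
  · obtain ⟨t, ht⟩ := (G.induce s).exists_isNClique_cliqueNum
    have h2 := ht.isClique.card_le_chromaticNumber
    rw [ht.card_eq] at h2
    exact h2
end

section
/- A finite simple graph G is ωψ-perfect (for every induced subgraph H, the clique number of H equals the pseudoachromatic number of H) if and only if G is bψ-perfect (for every induced subgraph H, the b-chromatic number of H equals the pseudoachromatic number of H). -/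
open SimpleGraph

set_option linter.unusedSectionVars false
set_option maxHeartbeats 2000000

section Basics
variable {V : Type*} [Fintype V] {G : SimpleGraph V}

lemma mem_le_card {k : ℕ} {c : V → Fin k} (hc : Function.Surjective c) :
    k ≤ Fintype.card V := by
  simpa using Fintype.card_le_of_surjective c hc

lemma cliqueSet_bddAbove (G : SimpleGraph V) : BddAbove {n | ∃ s, G.IsNClique n s} := by
  refine ⟨Fintype.card V, fun y hy => ?_⟩
  obtain ⟨s, hs⟩ := hy
  rw [isNClique_iff] at hs
  rw [← hs.right]
  exact Finset.card_le_card (Finset.subset_univ s)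

lemma isNClique_le_cliqueNum {n : ℕ} {t : Finset V} (h : G.IsNClique n t) :
    n ≤ G.cliqueNum :=
  le_csSup (cliqueSet_bddAbove G) ⟨t, h⟩

lemma cliqueNum_ge_fun {k : ℕ} (f : Fin k → V)
    (h : ∀ i j : Fin k, i ≠ j → G.Adj (f i) (f j)) : k ≤ G.cliqueNum := by
  classical
  have hinj : Function.Injective f := by
    intro i j hij
    by_contra hne
    exact G.irrefl (hij ▸ h i j hne)
  have : G.IsNClique k (Finset.univ.image f) := by
    constructor
    · intro x hx y hy hxy
      simp only [Finset.coe_image, Set.mem_image] at hx hy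
      obtain ⟨i, -, rfl⟩ := hx
      obtain ⟨j, -, rfl⟩ := hy
      exact h i j (fun hij => hxy (by rw [hij]))
    · rw [Finset.card_image_of_injective _ hinj, Finset.card_univ, Fintype.card_fin]
  exact isNClique_le_cliqueNum this

lemma cliqueNum_induce_le (s : Set V) : (G.induce s).cliqueNum ≤ G.cliqueNum := by
  classical
  haveI : Fintype ↥s := Fintype.ofFinite _
  obtain ⟨t, ht⟩ := (G.induce s).exists_isNClique_cliqueNum
  refine isNClique_le_cliqueNum (t := t.map ⟨Subtype.val, Subtype.val_injective⟩) ?_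
  constructor
  · intro x hx y hy hxy
    simp only [Finset.coe_map, Set.mem_image, Function.Embedding.coeFn_mk] at hx hy
    obtain ⟨⟨x, hxs⟩, hxt, rfl⟩ := hx
    obtain ⟨⟨y, hys⟩, hyt, rfl⟩ := hy
    have hne : (⟨x, hxs⟩ : s) ≠ ⟨y, hys⟩ := fun h => hxy (congrArg Subtype.val h)
    exact ht.1 hxt hyt hne
  · rw [Finset.card_map]; exact ht.2

lemma cliqueNum_le_two_of_triangle_free
    (h : ∀ x y z : V, G.Adj x y → G.Adj x z → G.Adj y z → False) : G.cliqueNum ≤ 2 := by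
  classical
  refine csSup_le ⟨0, ∅, isNClique_empty.mpr rfl⟩ ?_
  rintro n ⟨t, ht⟩
  by_contra hn
  push_neg at hn
  obtain ⟨u, hut, hcard⟩ := Finset.exists_subset_card_eq (le_trans hn ht.2.ge)
  have h3 : G.IsNClique 3 u := ⟨ht.1.subset (by exact_mod_cast hut), hcard⟩
  rw [is3Clique_iff] at h3
  obtain ⟨a, b, c, hab, hac, hbc, -⟩ := h3
  exact h a b c hab hac hbc

lemma cliqueNum_pos (v : V) : 1 ≤ G.cliqueNum := by
  classical
  exact isNClique_le_cliqueNum (t := {v}) (isNClique_singleton.mpr rfl)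

lemma psiSet_bddAbove (G : SimpleGraph V) :
    BddAbove {k | ∃ c : V → Fin k, IsCompleteColoring G c} := by
  refine ⟨Fintype.card V, fun k hk => ?_⟩
  obtain ⟨c, hc, -⟩ := hk
  exact mem_le_card hc

lemma psiSet_nonempty (G : SimpleGraph V) :
    {k | ∃ c : V → Fin k, IsCompleteColoring G c}.Nonempty := by
  by_cases h : Nonempty V
  · refine ⟨1, fun _ => 0, fun b => ⟨h.some, Subsingleton.elim _ _⟩, ?_⟩
    intro i j hij
    exact absurd (Subsingleton.elim i j) hij
  · refine ⟨0, fun v => absurd ⟨v⟩ h, fun b => b.elim0, fun i => i.elim0⟩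

lemma psi_mem (G : SimpleGraph V) :
    ∃ c : V → Fin (pseudoachromaticNumber G), IsCompleteColoring G c :=
  Nat.sSup_mem (psiSet_nonempty G) (psiSet_bddAbove G)

lemma le_psi {k : ℕ} {c : V → Fin k} (hc : IsCompleteColoring G c) :
    k ≤ pseudoachromaticNumber G :=
  le_csSup (psiSet_bddAbove G) ⟨c, hc⟩

lemma psi_le {m : ℕ} (h : ∀ k, ∀ c : V → Fin k, IsCompleteColoring G c → k ≤ m) :
    pseudoachromaticNumber G ≤ m := by
  refine csSup_le (psiSet_nonempty G) ?_
  rintro k ⟨c, hc⟩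
  exact h k c hc

lemma bSet_bddAbove (G : SimpleGraph V) :
    BddAbove {k | ∃ c : V → Fin k, IsProperColoring G c ∧ IsDominatingColoring G c} := by
  refine ⟨Fintype.card V, fun k hk => ?_⟩
  obtain ⟨c, -, hc, -⟩ := hk
  exact mem_le_card hc

/-- Descend: from a proper surjective coloring with an undominated class, get one fewer color. -/
lemma descend_coloring {k : ℕ} {c : V → Fin (k + 1)} {i : Fin (k + 1)}
    (hp : IsProperColoring G c) (hs : Function.Surjective c)
    (hmiss : ∀ v : V, c v = i → ∃ j : Fin (k + 1), j ≠ i ∧ ∀ u : V, G.Adj v u → c u ≠ j) :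
    ∃ d : V → Fin k, IsProperColoring G d ∧ Function.Surjective d := by
  classical
  have hex : ∀ v : V, ∃ j : Fin (k + 1), j ≠ i ∧ (c v = i → ∀ u : V, G.Adj v u → c u ≠ j)
      ∧ (c v ≠ i → j = c v) := by
    intro v
    by_cases hv : c v = i
    · obtain ⟨j, hji, hj⟩ := hmiss v hv
      exact ⟨j, hji, fun _ => hj, fun h => absurd hv h⟩
    · exact ⟨c v, hv, fun h => absurd h hv, fun _ => rfl⟩
  choose j' hj'ne hj'dom hj'eq using hex
  -- j' is proper
  have hj'p : ∀ u v : V, G.Adj u v → j' u ≠ j' v := by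
    intro u v huv
    by_cases hu : c u = i <;> by_cases hv : c v = i
    · exact absurd (hu.trans hv.symm) (hp u v huv)
    · rw [hj'eq v hv]
      exact fun h => hj'dom u hu v huv h.symm
    · rw [hj'eq u hu]
      exact fun h => hj'dom v hv u (G.adj_symm huv) h
    · rw [hj'eq u hu, hj'eq v hv]
      exact hp u v huv
  have hd : ∀ v : V, ∃ b : Fin k, i.succAbove b = j' v := fun v =>
    Fin.exists_succAbove_eq (hj'ne v)
  choose d hdef using hd
  refine ⟨d, fun u v huv hduv => hj'p u v huv ?_, fun b => ?_⟩
  · rw [← hdef u, ← hdef v, hduv]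
  · obtain ⟨v, hv⟩ := hs (i.succAbove b)
    have hvne : c v ≠ i := hv ▸ Fin.succAbove_ne i b
    refine ⟨v, Fin.succAbove_right_injective (p := i) ?_⟩
    rw [hdef v, hj'eq v hvne, hv]

/-- There is a proper dominating coloring with at least `cliqueNum` colors. -/
lemma exists_b_coloring_ge_cliqueNum (G : SimpleGraph V) :
    ∃ k, (∃ c : V → Fin k, IsProperColoring G c ∧ IsDominatingColoring G c) ∧
      G.cliqueNum ≤ k := by
  classical
  by_cases hV : Nonempty V
  case neg =>
    refine ⟨0, ⟨fun v => absurd ⟨v⟩ hV, fun u v huv => absurd ⟨u⟩ hV,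
      fun b => b.elim0, fun i => i.elim0⟩, ?_⟩
    refine csSup_le ⟨0, ∅, isNClique_empty.mpr rfl⟩ ?_
    rintro n ⟨t, ht⟩
    have hle : n ≤ Fintype.card V := by
      rw [← ht.2]
      exact Finset.card_le_card (Finset.subset_univ t)
    simpa [Fintype.card_eq_zero_iff.mpr (not_nonempty_iff.mp hV)] using hle
  case pos =>
  set T := {k | ∃ c : V → Fin k, IsProperColoring G c ∧ Function.Surjective c} with hT
  have hTne : T.Nonempty := by
    refine ⟨Fintype.card V, (Fintype.equivFin V), fun u v huv => ?_, (Fintype.equivFin V).surjective⟩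
    simp only [ne_eq, EmbeddingLike.apply_eq_iff_eq]
    exact G.ne_of_adj huv
  obtain ⟨c, hcp, hcs⟩ : sInf T ∈ T := Nat.sInf_mem hTne
  have hdom : IsDominatingColoring G c := by
    refine ⟨hcs, ?_⟩
    by_contra hknd
    push_neg at hknd
    obtain ⟨i, hi⟩ := hknd
    rcases hnm : sInf T with _ | m
    · exact (Fin.cast (by rw [hnm]) (c hV.some)).elim0
    have he : sInf T = m + 1 := hnm
    let e : Fin (sInf T) ≃ Fin (m + 1) := finCongr he
    obtain ⟨d, hdp, hds⟩ := descend_coloring (G := G) (c := fun v => e (c v)) (i := e i)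
      (fun u v huv h => hcp u v huv (e.injective h))
      (e.surjective.comp hcs)
      (by
        intro v hv
        obtain ⟨j, hji, hj⟩ := hi v (e.injective hv)
        exact ⟨e j, fun h => hji (e.injective h),
          fun u hu h => hj u hu (e.injective h)⟩)
    have hmem : m ∈ T := ⟨d, hdp, hds⟩
    have := Nat.sInf_le hmem
    omega
  refine ⟨sInf T, ⟨c, hcp, hdom⟩, ?_⟩
  obtain ⟨t, ht⟩ := G.exists_isNClique_cliqueNum
  rw [← ht.2]
  have himg : Finset.card (t.image c) = t.card := by
    refine Finset.card_image_of_injOn ?_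
    intro x hx y hy hxy
    by_contra hne
    exact hcp x y (ht.1 hx hy hne) hxy
  calc t.card = (t.image c).card := himg.symm
    _ ≤ (Finset.univ : Finset (Fin (sInf T))).card := Finset.card_le_card (Finset.subset_univ _)
    _ = sInf T := by simp

end Basics

def NoP4 {V : Type*} (G : SimpleGraph V) : Prop :=
  ∀ a b c d : V, G.Adj a b → G.Adj b c → G.Adj c d →
    ¬G.Adj a c → ¬G.Adj a d → ¬G.Adj b d → a ≠ c → a ≠ d → b ≠ d → False

def NoC4 {V : Type*} (G : SimpleGraph V) : Prop :=
  ∀ a b c d : V, G.Adj a b → G.Adj b c → G.Adj c d → G.Adj d a →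
    ¬G.Adj a c → ¬G.Adj b d → a ≠ c → b ≠ d → False

def No3K2 {V : Type*} (G : SimpleGraph V) : Prop :=
  ∀ a b c d e f : V, G.Adj a b → G.Adj c d → G.Adj e f →
    ¬G.Adj a c → ¬G.Adj a d → ¬G.Adj b c → ¬G.Adj b d →
    ¬G.Adj a e → ¬G.Adj a f → ¬G.Adj b e → ¬G.Adj b f →
    ¬G.Adj c e → ¬G.Adj c f → ¬G.Adj d e → ¬G.Adj d f →
    a ≠ c → a ≠ d → b ≠ c → b ≠ d → a ≠ e → a ≠ f → b ≠ e → b ≠ f →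
    c ≠ e → c ≠ f → d ≠ e → d ≠ f → False

def NoP3K2 {V : Type*} (G : SimpleGraph V) : Prop :=
  ∀ a b c d e : V, G.Adj a b → G.Adj b c → G.Adj d e →
    ¬G.Adj a c → ¬G.Adj a d → ¬G.Adj a e → ¬G.Adj b d → ¬G.Adj b e →
    ¬G.Adj c d → ¬G.Adj c e → a ≠ c →
    a ≠ d → a ≠ e → b ≠ d → b ≠ e → c ≠ d → c ≠ e → False

section Transfer
variable {V : Type*} {G : SimpleGraph V} {s : Set V}

lemma NoP4.induce (h : NoP4 G) : NoP4 (G.induce s) := by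
  intro a b c d hab hbc hcd hac had hbd nac nad nbd
  simp only [comap_adj, Function.Embedding.coe_subtype] at hab hbc hcd hac had hbd
  exact h a b c d hab hbc hcd hac had hbd
    (fun h' => nac (Subtype.ext h')) (fun h' => nad (Subtype.ext h'))
    (fun h' => nbd (Subtype.ext h'))

lemma NoC4.induce (h : NoC4 G) : NoC4 (G.induce s) := by
  intro a b c d hab hbc hcd hda hac hbd nac nbd
  simp only [comap_adj, Function.Embedding.coe_subtype] at hab hbc hcd hda hac hbd
  exact h a b c d hab hbc hcd hda hac hbd
    (fun h' => nac (Subtype.ext h')) (fun h' => nbd (Subtype.ext h'))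

lemma No3K2.induce (h : No3K2 G) : No3K2 (G.induce s) := by
  intro a b c d e f hab hcd hef h1 h2 h3 h4 h5 h6 h7 h8 h9 h10 h11 h12
    n1 n2 n3 n4 n5 n6 n7 n8 n9 n10 n11 n12
  simp only [comap_adj, Function.Embedding.coe_subtype] at hab hcd hef h1 h2 h3 h4 h5 h6 h7 h8 h9 h10 h11 h12
  exact h a b c d e f hab hcd hef h1 h2 h3 h4 h5 h6 h7 h8 h9 h10 h11 h12
    (fun h' => n1 (Subtype.ext h')) (fun h' => n2 (Subtype.ext h'))
    (fun h' => n3 (Subtype.ext h')) (fun h' => n4 (Subtype.ext h'))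
    (fun h' => n5 (Subtype.ext h')) (fun h' => n6 (Subtype.ext h'))
    (fun h' => n7 (Subtype.ext h')) (fun h' => n8 (Subtype.ext h'))
    (fun h' => n9 (Subtype.ext h')) (fun h' => n10 (Subtype.ext h'))
    (fun h' => n11 (Subtype.ext h')) (fun h' => n12 (Subtype.ext h'))

lemma NoP3K2.induce (h : NoP3K2 G) : NoP3K2 (G.induce s) := by
  intro a b c d e hab hbc hde h1 h2 h3 h4 h5 h6 h7 n0 n1 n2 n3 n4 n5 n6
  simp only [comap_adj, Function.Embedding.coe_subtype] at hab hbc hde h1 h2 h3 h4 h5 h6 h7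
  exact h a b c d e hab hbc hde h1 h2 h3 h4 h5 h6 h7
    (fun h' => n0 (Subtype.ext h'))
    (fun h' => n1 (Subtype.ext h')) (fun h' => n2 (Subtype.ext h'))
    (fun h' => n3 (Subtype.ext h')) (fun h' => n4 (Subtype.ext h'))
    (fun h' => n5 (Subtype.ext h')) (fun h' => n6 (Subtype.ext h'))

end Transfer

section Wolk
variable {V : Type*} [Fintype V] {G : SimpleGraph V}

/-- If `v` has maximum degree in a `{P4,C4}`-free graph, its closed neighborhood
has no edges leaving it. -/
lemma wolk_local [DecidableEq V] [DecidableRel G.Adj] (hP4 : NoP4 G) (hC4 : NoC4 G) {v : V}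
    (hmax : ∀ x : V, G.degree x ≤ G.degree v) {u w : V}
    (hvu : G.Adj v u) (huw : G.Adj u w) (hw : ¬G.Adj v w) (hwv : w ≠ v) : False := by
  by_cases hx : ∃ x, G.Adj v x ∧ ¬G.Adj u x ∧ x ≠ u
  · obtain ⟨x, hvx, hux, hxu⟩ := hx
    have hxw : x ≠ w := fun h => hw (h ▸ hvx)
    have hvw' : v ≠ w := fun h => hwv h.symm
    by_cases hadj : G.Adj x w
    · exact hC4 x v u w (G.adj_symm hvx) hvu huw (G.adj_symm hadj)
        (fun h => hux (G.adj_symm h)) hw hxu hvw'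
    · exact hP4 x v u w (G.adj_symm hvx) hvu huw (fun h => hux (G.adj_symm h)) hadj hw hxu hxw hvw'
  · push_neg at hx
    have hsub : (G.neighborFinset v \ {u}) ∪ {v, w} ⊆ G.neighborFinset u := by
      intro y hy
      rw [Finset.mem_union, Finset.mem_sdiff, Finset.mem_singleton] at hy
      rw [mem_neighborFinset]
      rcases hy with ⟨hy1, hy2⟩ | hy
      · rw [mem_neighborFinset] at hy1
        by_cases hyu : G.Adj u y
        · exact hyu
        · exact absurd (hx y hy1 hyu) hy2
      · rw [Finset.mem_insert, Finset.mem_singleton] at hy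
        rcases hy with rfl | rfl
        · exact G.adj_symm hvu
        · exact huw
    have hdisj : Disjoint (G.neighborFinset v \ {u}) ({v, w} : Finset V) := by
      rw [Finset.disjoint_right]
      intro y hy hmem
      rw [Finset.mem_insert, Finset.mem_singleton] at hy
      rw [Finset.mem_sdiff, mem_neighborFinset] at hmem
      rcases hy with rfl | rfl
      · exact G.irrefl hmem.1
      · exact hw hmem.1
    have hcard : (G.neighborFinset v).card + 1 ≤ (G.neighborFinset u).card := by
      have h1 : ((G.neighborFinset v \ {u}) ∪ {v, w}).card ≤ G.degree u :=
        Finset.card_le_card hsub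
      rw [Finset.card_union_of_disjoint hdisj, Finset.card_sdiff_of_subset
        (by simpa [Finset.singleton_subset_iff, mem_neighborFinset] using hvu)] at h1
      have hvw2 : ({v, w} : Finset V).card = 2 := by
        rw [Finset.card_insert_of_notMem (by simpa using fun h => hwv h.symm),
          Finset.card_singleton]
      rw [hvw2, Finset.card_singleton] at h1
      have hdegv : 1 ≤ (G.neighborFinset v).card :=
        Finset.card_pos.mpr ⟨u, by rwa [mem_neighborFinset]⟩
      have hdu : G.degree u = (G.neighborFinset u).card := rfl
      rw [hdu] at h1
      omega
    have h2 := hmax u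
    have hdu : G.degree u = (G.neighborFinset u).card := rfl
    have hdv : G.degree v = (G.neighborFinset v).card := rfl
    rw [hdu, hdv] at h2
    omega

end Wolk

section Structural
variable {V : Type*} [Fintype V] {G : SimpleGraph V}

lemma psi_del_vertex (v : V) :
    pseudoachromaticNumber G ≤ pseudoachromaticNumber (G.induce {x | x ≠ v}) + 1 := by
  classical
  refine psi_le ?_
  intro k c hc
  rcases k with _ | m
  · omega
  rcases Nat.eq_zero_or_pos m with rfl | hm
  · omega
  -- m ≥ 1; build a complete m-coloring of the vertex-deleted graph
  set i0 := c v with hi0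
  have hg : ∀ y : Fin (m + 1), y ≠ i0 → ∃ b : Fin m, i0.succAbove b = y := fun y hy =>
    Fin.exists_succAbove_eq hy
  set g : Fin (m + 1) → Fin m := fun y =>
    if h : y = i0 then ⟨0, hm⟩ else (hg y h).choose with hgdef
  have hgspec : ∀ y (h : y ≠ i0), i0.succAbove (g y) = y := by
    intro y h
    rw [hgdef]
    simp only [dif_neg h]
    exact (hg y h).choose_spec
  have hginv : ∀ b : Fin m, g (i0.succAbove b) = b := by
    intro b
    have hne := Fin.succAbove_ne i0 b
    exact Fin.succAbove_right_injective (p := i0) (hgspec _ hne)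
  set d : {x | x ≠ v} → Fin m := fun x => g (c x.1) with hddef
  have hcomp : IsCompleteColoring (G.induce {x | x ≠ v}) d := by
    constructor
    · intro b
      obtain ⟨u, hu⟩ := hc.1 (i0.succAbove b)
      have hune : u ≠ v := by
        intro h
        exact Fin.succAbove_ne i0 b (by rw [← hu, h])
      exact ⟨⟨u, hune⟩, by rw [hddef]; simp only [hu]; exact hginv b⟩
    · intro p q hpq
      have hne : i0.succAbove p ≠ i0.succAbove q :=
        fun h => hpq (Fin.succAbove_right_injective (p := i0) h)
      obtain ⟨u, w, huw, hcu, hcw⟩ := hc.2 _ _ hne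
      have hune : u ≠ v := fun h => Fin.succAbove_ne i0 p (by rw [← hcu, h])
      have hwne : w ≠ v := fun h => Fin.succAbove_ne i0 q (by rw [← hcw, h])
      refine ⟨⟨u, hune⟩, ⟨w, hwne⟩, by simpa using huw, ?_, ?_⟩
      · rw [hddef]; simp only [hcu]; exact hginv p
      · rw [hddef]; simp only [hcw]; exact hginv q
  have := le_psi hcomp
  omega

lemma cliqueNum_universal (v : V) (huniv : ∀ x : V, x ≠ v → G.Adj v x) :
    (G.induce {x | x ≠ v}).cliqueNum + 1 ≤ G.cliqueNum := by
  classical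
  haveI : Fintype ↥{x | x ≠ v} := Fintype.ofFinite _
  obtain ⟨t, ht⟩ := (G.induce {x | x ≠ v}).exists_isNClique_cliqueNum
  have hmap : G.IsNClique (G.induce {x | x ≠ v}).cliqueNum
      (t.map ⟨Subtype.val, Subtype.val_injective⟩) := by
    constructor
    · intro x hx y hy hxy
      simp only [Finset.coe_map, Set.mem_image, Function.Embedding.coeFn_mk] at hx hy
      obtain ⟨⟨x, hxs⟩, hxt, rfl⟩ := hx
      obtain ⟨⟨y, hys⟩, hyt, rfl⟩ := hy
      exact ht.1 hxt hyt (fun h => hxy (congrArg Subtype.val h))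
    · rw [Finset.card_map]; exact ht.2
  have hvnot : v ∉ t.map ⟨Subtype.val, Subtype.val_injective⟩ := by
    simp only [Finset.mem_map, Function.Embedding.coeFn_mk]
    rintro ⟨⟨x, hxs⟩, -, h⟩
    exact hxs h
  refine isNClique_le_cliqueNum (hmap.insert (a := v) ?_)
  intro b hb
  simp only [Finset.mem_map, Function.Embedding.coeFn_mk] at hb
  obtain ⟨⟨x, hxs⟩, -, rfl⟩ := hb
  exact huniv x hxs

lemma psi_restrict (s : Set V) (hedges : ∀ x y : V, G.Adj x y → x ∈ s)
    {k : ℕ} (hk2 : 2 ≤ k) {c : V → Fin k} (hc : IsCompleteColoring G c) :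
    k ≤ pseudoachromaticNumber (G.induce s) := by
  classical
  refine le_psi (c := fun x : s => c x.1) ⟨?_, ?_⟩
  · intro i
    have h2 : ∃ j : Fin k, j ≠ i := by
      by_cases h : i = ⟨0, by omega⟩
      · exact ⟨⟨1, by omega⟩, by rw [h]; intro hh; simpa using congrArg Fin.val hh⟩
      · exact ⟨⟨0, by omega⟩, fun hh => h (hh ▸ rfl)⟩
    obtain ⟨j, hj⟩ := h2
    obtain ⟨u, w, huw, hcu, hcw⟩ := hc.2 i j (Ne.symm hj)
    exact ⟨⟨u, hedges u w huw⟩, hcu⟩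
  · intro i j hij
    obtain ⟨u, w, huw, hcu, hcw⟩ := hc.2 i j hij
    exact ⟨⟨u, hedges u w huw⟩, ⟨w, hedges w u (G.adj_symm huw)⟩, by simpa using huw, hcu, hcw⟩

end Structural

universe u

abbrev XPred {V : Type*} (G : SimpleGraph V) (v x : V) : Prop := x = v ∨ G.Adj v x

abbrev YPred {V : Type*} (G : SimpleGraph V) (v d0 x : V) : Prop :=
  ¬XPred G v x ∧ (x = d0 ∨ G.Adj d0 x)

theorem key_aux (n : ℕ) : ∀ {V : Type u} [Fintype V] (G : SimpleGraph V),
    Fintype.card V ≤ n → NoP4 G → NoC4 G → No3K2 G → NoP3K2 G →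
    pseudoachromaticNumber G ≤ G.cliqueNum := by
  induction n with
  | zero =>
    intro V _ G hcard _ _ _ _
    haveI : IsEmpty V := Fintype.card_eq_zero_iff.mp (Nat.le_zero.mp hcard)
    refine psi_le ?_
    intro k c hc
    rcases Nat.eq_zero_or_pos k with rfl | hk
    · exact Nat.zero_le _
    · obtain ⟨x, -⟩ := hc.1 ⟨0, hk⟩
      exact isEmptyElim x
  | succ n ih =>
    intro V _ G hcard h4 hc4 h32 hp32
    classical
    obtain ⟨c, hc⟩ := psi_mem G
    by_cases hk2 : 2 ≤ pseudoachromaticNumber G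
    case neg =>
      have hk01 : pseudoachromaticNumber G = 0 ∨ pseudoachromaticNumber G = 1 := by omega
      rcases hk01 with h0 | h1
      · omega
      · obtain ⟨x, -⟩ := hc.1 ⟨0, by omega⟩
        have := cliqueNum_pos (G := G) x
        omega
    case pos =>
    -- V nonempty, pick max degree vertex
    obtain ⟨x0, -⟩ := hc.1 ⟨0, by omega⟩
    obtain ⟨v, -, hvmax'⟩ := Finset.exists_max_image Finset.univ (fun x => G.degree x)
      ⟨x0, Finset.mem_univ x0⟩
    have hvmax : ∀ x : V, G.degree x ≤ G.degree v := fun x => hvmax' x (Finset.mem_univ x)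
    by_cases huniv : ∀ x : V, x ≠ v → G.Adj v x
    case pos =>
      haveI : Fintype ↥{x | x ≠ v} := Fintype.ofFinite _
      have hlt : Fintype.card ↥{x | x ≠ v} < Fintype.card V := by
        refine Fintype.card_lt_of_injective_of_notMem Subtype.val Subtype.val_injective
          (b := v) ?_
        rintro ⟨⟨x, hx⟩, h⟩
        exact hx h
      have h3 := ih (G.induce {x | x ≠ v}) (by omega) h4.induce hc4.induce h32.induce
        hp32.induce
      have h1 := psi_del_vertex (G := G) v
      have h5 := cliqueNum_universal v huniv
      omega
    case neg =>
      push_neg at huniv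
      obtain ⟨w0, hw0v, hw0⟩ := huniv
      have hvX : XPred G v v := Or.inl rfl
      have hnX : ∀ {x}, ¬XPred G v x → x ≠ v ∧ ¬G.Adj v x := by
        intro x hx
        exact ⟨fun h => hx (Or.inl h), fun h => hx (Or.inr h)⟩
      have hcross : ∀ x y, G.Adj x y → XPred G v x → XPred G v y := by
        intro x y hxy hx
        by_contra hy
        rcases hx with rfl | hvx
        · exact (hnX hy).2 hxy
        · exact wolk_local h4 hc4 hvmax hvx hxy (hnX hy).2 (hnX hy).1
      have hcrossn : ∀ x y, XPred G v x → ¬XPred G v y → ¬G.Adj x y :=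
        fun x y hx hy h => hy (hcross x y h hx)
      by_cases hedge : ∃ d e, G.Adj d e ∧ ¬XPred G v d
      case neg =>
        push_neg at hedge
        have hedges : ∀ x y : V, G.Adj x y → x ∈ {x | XPred G v x} :=
          fun x y hxy => hedge x y hxy
        have hpsir := psi_restrict (G := G) {x | XPred G v x} hedges hk2 hc
        haveI : Fintype ↥{x | XPred G v x} := Fintype.ofFinite _
        have hlt : Fintype.card ↥{x | XPred G v x} < Fintype.card V := by
          refine Fintype.card_lt_of_injective_of_notMem Subtype.val Subtype.val_injective
            (b := w0) ?_
          rintro ⟨⟨x, hx⟩, h⟩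
          subst h
          rcases hx with rfl | hadj
          · exact hw0v rfl
          · exact hw0 hadj
        have h3 := ih (G.induce {x | XPred G v x}) (by omega) h4.induce hc4.induce h32.induce
          hp32.induce
        have h6 := _root_.cliqueNum_induce_le (G := G) {x | XPred G v x}
        omega
      case pos =>
        obtain ⟨d0, e0, hde, hd0⟩ := hedge
        have he0 : ¬XPred G v e0 := fun he => hd0 (hcross e0 d0 (G.adj_symm hde) he)
        have hu0 : ∃ u0, G.Adj v u0 := by
          by_contra hvnone
          push_neg at hvnone
          have hdeg0 : G.degree v = 0 := by
            rw [← card_neighborFinset_eq_degree, Finset.card_eq_zero]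
            ext y
            simp only [mem_neighborFinset, Finset.notMem_empty, iff_false]
            exact hvnone y
          have : 1 ≤ G.degree d0 := by
            rw [← card_neighborFinset_eq_degree]
            exact Finset.card_pos.mpr ⟨e0, by rwa [mem_neighborFinset]⟩
          have := hvmax d0
          omega
        obtain ⟨u0, hu0⟩ := hu0
        have hu0X : XPred G v u0 := Or.inr hu0
        -- Claim 1: Xp is a clique
        have hXclique : ∀ x y, XPred G v x → XPred G v y → x ≠ y → G.Adj x y := by
          intro x y hx hy hxy
          rcases hx with rfl | hvx
          · rcases hy with rfl | hvy
            · exact absurd rfl hxy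
            · exact hvy
          rcases hy with rfl | hvy
          · exact G.adj_symm hvx
          by_contra hnadj
          exact hp32 x v y d0 e0 (G.adj_symm hvx) hvy hde hnadj
            (hcrossn x d0 (Or.inr hvx) hd0) (hcrossn x e0 (Or.inr hvx) he0)
            (hcrossn v d0 hvX hd0) (hcrossn v e0 hvX he0)
            (hcrossn y d0 (Or.inr hvy) hd0) (hcrossn y e0 (Or.inr hvy) he0)
            hxy
            (fun h => hd0 (h ▸ Or.inr hvx)) (fun h => he0 (h ▸ Or.inr hvx))
            (fun h => hd0 (h ▸ hvX)) (fun h => he0 (h ▸ hvX))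
            (fun h => hd0 (h ▸ Or.inr hvy)) (fun h => he0 (h ▸ Or.inr hvy))
        -- no induced P3 outside Xp
        have hnoP3out : ∀ x y z, ¬XPred G v x → ¬XPred G v y → ¬XPred G v z → G.Adj x y → G.Adj y z → x ≠ z →
            G.Adj x z := by
          intro x y z hx hy hz hxy hyz hxz
          by_contra hnadj
          exact hp32 x y z v u0 hxy hyz hu0 hnadj
            (fun h => (hnX hx).2 (G.adj_symm h)) (fun h => hcrossn u0 x hu0X hx (G.adj_symm h))
            (fun h => (hnX hy).2 (G.adj_symm h)) (fun h => hcrossn u0 y hu0X hy (G.adj_symm h))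
            (fun h => (hnX hz).2 (G.adj_symm h)) (fun h => hcrossn u0 z hu0X hz (G.adj_symm h))
            hxz
            (hnX hx).1 (fun h => hx (h ▸ hu0X)) (hnX hy).1 (fun h => hy (h ▸ hu0X))
            (hnX hz).1 (fun h => hz (h ▸ hu0X))
        have hd0Y : YPred G v d0 d0 := ⟨hd0, Or.inl rfl⟩
        have hYclique : ∀ x y, YPred G v d0 x → YPred G v d0 y → x ≠ y → G.Adj x y := by
          intro x y hx hy hxy
          rcases hx.2 with rfl | hdx
          · rcases hy.2 with rfl | hdy
            · exact absurd rfl hxy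
            · exact hdy
          rcases hy.2 with rfl | hdy
          · exact G.adj_symm hdx
          exact hnoP3out x d0 y hx.1 hd0 hy.1 (G.adj_symm hdx) hdy hxy
        -- Claim 3: every edge is inside Xp or inside Yp
        have hedgeloc : ∀ x y, G.Adj x y → (XPred G v x ∧ XPred G v y) ∨ (YPred G v d0 x ∧ YPred G v d0 y) := by
          intro x y hxy
          by_cases hx : XPred G v x
          · exact Or.inl ⟨hx, hcross x y hxy hx⟩
          by_cases hy : XPred G v y
          · exact absurd (hcross y x (G.adj_symm hxy) hy) hx
          right
          by_cases hxd : x = d0 ∨ G.Adj d0 x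
          · refine ⟨⟨hx, hxd⟩, hy, ?_⟩
            rcases hxd with rfl | hdx
            · exact Or.inr hxy
            · by_cases hyd : y = d0
              · exact Or.inl hyd
              · exact Or.inr (hnoP3out d0 x y hd0 hx hy hdx hxy (fun h => hyd h.symm))
          · by_cases hyd : y = d0 ∨ G.Adj d0 y
            · exfalso
              rcases hyd with rfl | hdy
              · exact hxd (Or.inr (G.adj_symm hxy))
              · refine hxd (Or.inr (hnoP3out d0 y x hd0 hy hx hdy (G.adj_symm hxy) ?_))
                intro h
                exact hxd (Or.inl h.symm)
            · push_neg at hxd hyd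
              exfalso
              have hex : ¬G.Adj e0 x := by
                intro h
                exact hxd.2 (hnoP3out d0 e0 x hd0 he0 hx hde h (fun hh => hxd.1 hh.symm))
              have hey : ¬G.Adj e0 y := by
                intro h
                exact hyd.2 (hnoP3out d0 e0 y hd0 he0 hy hde h (fun hh => hyd.1 hh.symm))
              exact h32 v u0 d0 e0 x y hu0 hde hxy
                (hcrossn v d0 hvX hd0) (hcrossn v e0 hvX he0)
                (hcrossn u0 d0 hu0X hd0) (hcrossn u0 e0 hu0X he0)
                (hcrossn v x hvX hx) (hcrossn v y hvX hy)
                (hcrossn u0 x hu0X hx) (hcrossn u0 y hu0X hy)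
                (fun h => hxd.2 h) (fun h => hyd.2 h)
                hex hey
                (fun h => hd0 (h ▸ hvX)) (fun h => he0 (h ▸ hvX))
                (fun h => hd0 (h ▸ hu0X)) (fun h => he0 (h ▸ hu0X))
                (fun h => hx (h ▸ hvX)) (fun h => hy (h ▸ hvX))
                (fun h => hx (h ▸ hu0X)) (fun h => hy (h ▸ hu0X))
                (fun h => hxd.1 h.symm) (fun h => hyd.1 h.symm)
                (fun h => hxd.2 (h ▸ hde)) (fun h => hyd.2 (h ▸ hde))
        -- dichotomy
        by_cases hall : ∀ i : Fin (pseudoachromaticNumber G), ∃ x, XPred G v x ∧ c x = i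
        · choose f hf1 hf2 using hall
          exact cliqueNum_ge_fun f (fun i j hij =>
            hXclique _ _ (hf1 i) (hf1 j) (fun h => hij (by rw [← hf2 i, ← hf2 j, h])))
        · push_neg at hall
          obtain ⟨i0, hi0⟩ := hall
          have hi0' : ∀ x, XPred G v x → c x ≠ i0 := by
            intro x hx hcx
            exact hi0 x hx hcx
          have hYall : ∀ i : Fin (pseudoachromaticNumber G), ∃ x, YPred G v d0 x ∧ c x = i := by
            intro i
            by_cases hii : i = i0
            · subst hii
              have h2 : ∃ j : Fin (pseudoachromaticNumber G), j ≠ i := by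
                by_cases h : i = ⟨0, by omega⟩
                · exact ⟨⟨1, by omega⟩, by rw [h]; intro hh; simpa using congrArg Fin.val hh⟩
                · exact ⟨⟨0, by omega⟩, fun hh => h (hh ▸ rfl)⟩
              obtain ⟨j, hj⟩ := h2
              obtain ⟨p, q, hpq, hcp, hcq⟩ := hc.2 i j (Ne.symm hj)
              rcases hedgeloc p q hpq with ⟨hpX, -⟩ | ⟨hpY, -⟩
              · exact absurd hcp (hi0' p hpX)
              · exact ⟨p, hpY, hcp⟩
            · obtain ⟨p, q, hpq, hcp, hcq⟩ := hc.2 i0 i (fun h => hii h.symm)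
              rcases hedgeloc p q hpq with ⟨hpX, -⟩ | ⟨-, hqY⟩
              · exact absurd hcp (hi0' p hpX)
              · exact ⟨q, hqY, hcq⟩
          choose f hf1 hf2 using hYall
          exact cliqueNum_ge_fun f (fun i j hij =>
            hYclique _ _ (hf1 i) (hf1 j) (fun h => hij (by rw [← hf2 i, ← hf2 j, h])))


section Derived
variable {V : Type*} [Fintype V] {G : SimpleGraph V}

lemma bSet_nonempty (G : SimpleGraph V) :
    {k | ∃ c : V → Fin k, IsProperColoring G c ∧ IsDominatingColoring G c}.Nonempty := by
  obtain ⟨k, hk, -⟩ := exists_b_coloring_ge_cliqueNum G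
  exact ⟨k, hk⟩

lemma omega_le_b (G : SimpleGraph V) : G.cliqueNum ≤ bChromaticNumber G := by
  obtain ⟨k, hk, hle⟩ := exists_b_coloring_ge_cliqueNum G
  exact le_trans hle (le_csSup (bSet_bddAbove G) hk)

lemma b_le_psi (G : SimpleGraph V) : bChromaticNumber G ≤ pseudoachromaticNumber G := by
  refine csSup_le (bSet_nonempty G) ?_
  rintro k ⟨c, hp, hsurj, hdom⟩
  refine le_psi (c := c) ⟨hsurj, ?_⟩
  intro i j hij
  obtain ⟨v, hv, hvd⟩ := hdom i
  obtain ⟨u, huadj, hucol⟩ := hvd j (Ne.symm hij)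
  exact ⟨v, u, huadj, hv, hucol⟩

lemma omega_le_psi (G : SimpleGraph V) :
    G.cliqueNum ≤ pseudoachromaticNumber G :=
  le_trans (omega_le_b G) (b_le_psi G)

end Derived


section SmallHelpers
variable {V : Type*} [Fintype V] {G : SimpleGraph V}

lemma psi_ge_three {s : Set V} (c : ↥s → Fin 3)
    (h01 : ∃ u w : ↥s, (G.induce s).Adj u w ∧ c u = 0 ∧ c w = 1)
    (h02 : ∃ u w : ↥s, (G.induce s).Adj u w ∧ c u = 0 ∧ c w = 2)
    (h12 : ∃ u w : ↥s, (G.induce s).Adj u w ∧ c u = 1 ∧ c w = 2) :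
    3 ≤ pseudoachromaticNumber (G.induce s) := by
  haveI : Fintype ↥s := Fintype.ofFinite _
  have sw : ∀ {i j : Fin 3}, (∃ u w : ↥s, (G.induce s).Adj u w ∧ c u = i ∧ c w = j) →
      ∃ u w : ↥s, (G.induce s).Adj u w ∧ c u = j ∧ c w = i := by
    rintro i j ⟨u, w, h, h1, h2⟩
    exact ⟨w, u, h.symm, h2, h1⟩
  refine le_psi (c := c) ⟨?_, ?_⟩
  · intro b
    fin_cases b
    · obtain ⟨u, -, -, hu, -⟩ := h01
      exact ⟨u, hu⟩
    · obtain ⟨-, w, -, -, hw⟩ := h01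
      exact ⟨w, hw⟩
    · obtain ⟨-, w, -, -, hw⟩ := h02
      exact ⟨w, hw⟩
  · intro i j hij
    fin_cases i <;> fin_cases j <;>
      first
        | exact absurd rfl hij
        | exact h01
        | exact h02
        | exact h12
        | exact sw h01
        | exact sw h02
        | exact sw h12

lemma exists_two_ne {k : ℕ} (hk : 3 ≤ k) (i : Fin k) :
    ∃ j1 j2 : Fin k, j1 ≠ i ∧ j2 ≠ i ∧ j1 ≠ j2 := by
  have h0 : (0 : ℕ) < k := by omega
  have h1 : (1 : ℕ) < k := by omega
  have h2 : (2 : ℕ) < k := by omega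
  by_cases hi0 : i = ⟨0, h0⟩
  · exact ⟨⟨1, h1⟩, ⟨2, h2⟩, by simp [hi0, Fin.ext_iff], by simp [hi0, Fin.ext_iff],
      by simp [Fin.ext_iff]⟩
  by_cases hi1 : i = ⟨1, h1⟩
  · exact ⟨⟨0, h0⟩, ⟨2, h2⟩, by simp [hi1, Fin.ext_iff], by simp [hi1, Fin.ext_iff],
      by simp [Fin.ext_iff]⟩
  · exact ⟨⟨0, h0⟩, ⟨1, h1⟩, fun h => hi0 h.symm, fun h => hi1 h.symm, by simp [Fin.ext_iff]⟩

/-- If every "branch vertex" (vertex with two distinct neighbors) is one of two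
given vertices, the b-chromatic number is at most 2. -/
lemma b_le_two_branch (b0 c0 : V)
    (h : ∀ x : V, (∃ u1 u2, G.Adj x u1 ∧ G.Adj x u2 ∧ u1 ≠ u2) → x = b0 ∨ x = c0) :
    bChromaticNumber G ≤ 2 := by
  refine csSup_le (bSet_nonempty G) ?_
  rintro k ⟨cc, hp, hs, hdom⟩
  by_contra hk
  push_neg at hk
  have hk3 : 3 ≤ k := hk
  have hbr : ∀ i : Fin k, ∃ x, cc x = i ∧ (x = b0 ∨ x = c0) := by
    intro i
    obtain ⟨v, hv, hvd⟩ := hdom i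
    obtain ⟨j1, j2, hj1, hj2, hj12⟩ := exists_two_ne hk3 i
    obtain ⟨u1, hu1, hc1⟩ := hvd j1 hj1
    obtain ⟨u2, hu2, hc2⟩ := hvd j2 hj2
    refine ⟨v, hv, h v ⟨u1, u2, hu1, hu2, ?_⟩⟩
    intro he
    exact hj12 (by rw [← hc1, ← hc2, he])
  obtain ⟨x0, hx0, hb0⟩ := hbr ⟨0, by omega⟩
  obtain ⟨x1, hx1, hb1⟩ := hbr ⟨1, by omega⟩
  obtain ⟨x2, hx2, hb2⟩ := hbr ⟨2, by omega⟩
  rcases hb0 with rfl | rfl <;> rcases hb1 with rfl | rfl <;> rcases hb2 with rfl | rfl <;>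
    simp_all [Fin.ext_iff]

end SmallHelpers

section C4B
variable {V : Type*} [Fintype V] {G : SimpleGraph V}

lemma b_le_two_C4 {a b c d : V} (hab : G.Adj a b) (hbc : G.Adj b c) (hcd : G.Adj c d)
    (hda : G.Adj d a) (hac : ¬G.Adj a c) (hbd : ¬G.Adj b d)
    (hac' : a ≠ c) (hbd' : b ≠ d) :
    bChromaticNumber (G.induce {a, b, c, d}) ≤ 2 := by
  classical
  haveI : Fintype ↥({a, b, c, d} : Set V) := Fintype.ofFinite _
  have ha : a ∈ ({a, b, c, d} : Set V) := by simp
  have hb : b ∈ ({a, b, c, d} : Set V) := by simp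
  have hc : c ∈ ({a, b, c, d} : Set V) := by simp
  have hd : d ∈ ({a, b, c, d} : Set V) := by simp
  set A : ↥({a, b, c, d} : Set V) := ⟨a, ha⟩ with hA
  set B : ↥({a, b, c, d} : Set V) := ⟨b, hb⟩ with hB
  set C : ↥({a, b, c, d} : Set V) := ⟨c, hc⟩ with hC
  set D : ↥({a, b, c, d} : Set V) := ⟨d, hd⟩ with hD
  have hmemall : ∀ x : ↥({a, b, c, d} : Set V), x = A ∨ x = B ∨ x = C ∨ x = D := by
    rintro ⟨x, hx⟩
    simp only [Set.mem_insert_iff, Set.mem_singleton_iff] at hx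
    rcases hx with rfl | rfl | rfl | rfl
    · exact Or.inl rfl
    · exact Or.inr (Or.inl rfl)
    · exact Or.inr (Or.inr (Or.inl rfl))
    · exact Or.inr (Or.inr (Or.inr rfl))
  have adjAB : (G.induce {a, b, c, d}).Adj A B := by simpa using hab
  have adjBC : (G.induce {a, b, c, d}).Adj B C := by simpa using hbc
  have adjCD : (G.induce {a, b, c, d}).Adj C D := by simpa using hcd
  have adjDA : (G.induce {a, b, c, d}).Adj D A := by simpa using hda
  refine csSup_le (bSet_nonempty _) ?_
  rintro k ⟨cc, hp, hs, hdom⟩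
  by_contra hk
  push_neg at hk
  have hk3 : 3 ≤ k := hk
  have pAB : cc A ≠ cc B := hp A B adjAB
  have pBC : cc B ≠ cc C := hp B C adjBC
  have pCD : cc C ≠ cc D := hp C D adjCD
  have pDA : cc D ≠ cc A := hp D A adjDA
  by_cases hAC : cc A = cc C
  · by_cases hBD : cc B = cc D
    · -- only two colors are used, contradiction with surjectivity and k ≥ 3
      obtain ⟨j1, j2, h1, h2, h12⟩ := exists_two_ne hk3 (cc A)
      have hr : ∃ r : Fin k, r ≠ cc A ∧ r ≠ cc B := by
        by_cases hj : j1 = cc B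
        · exact ⟨j2, h2, fun h => h12 (by rw [hj, h])⟩
        · exact ⟨j1, h1, hj⟩
      obtain ⟨r, hra, hrb⟩ := hr
      obtain ⟨x, hx⟩ := hs r
      rcases hmemall x with rfl | rfl | rfl | rfl
      · exact hra hx.symm
      · exact hrb hx.symm
      · exact hra (hx.symm.trans hAC.symm)
      · exact hrb (hx.symm.trans hBD.symm)
    · -- class of cc B is {B}; B has no neighbor colored cc D
      obtain ⟨v, hv, hvd⟩ := hdom (cc B)
      have hvB : v = B := by
        rcases hmemall v with rfl | rfl | rfl | rfl
        · exact absurd hv pAB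
        · rfl
        · exact absurd (hAC.trans hv) pAB
        · exact absurd hv.symm (fun h => hBD h)
      subst hvB
      obtain ⟨u, huadj, hucol⟩ := hvd (cc D) (fun h => hBD h.symm)
      rcases hmemall u with rfl | rfl | rfl | rfl
      · exact pDA (hucol.symm)
      · exact (G.induce _).irrefl huadj
      · exact pDA ((hucol.symm.trans hAC.symm).symm ▸ rfl)
      · simp only [comap_adj, Function.Embedding.coe_subtype] at huadj
        exact hbd huadj
  · -- class of cc A is {A}; A has no neighbor colored cc C
    obtain ⟨v, hv, hvd⟩ := hdom (cc A)
    have hvA : v = A := by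
      rcases hmemall v with rfl | rfl | rfl | rfl
      · rfl
      · exact absurd hv.symm pAB
      · exact absurd hv.symm (fun h => hAC h)
      · exact absurd hv pDA
    subst hvA
    obtain ⟨u, huadj, hucol⟩ := hvd (cc C) (fun h => hAC h.symm)
    rcases hmemall u with rfl | rfl | rfl | rfl
    · exact (G.induce _).irrefl huadj
    · exact pBC hucol
    · simp only [comap_adj, Function.Embedding.coe_subtype] at huadj
      exact hac huadj
    · exact pCD hucol.symm
end C4B

section Patterns
variable {V : Type*} [Fintype V] {G : SimpleGraph V}

lemma P4_bad {a b c d : V} (hab : G.Adj a b) (hbc : G.Adj b c) (hcd : G.Adj c d)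
    (hac : ¬G.Adj a c) (had : ¬G.Adj a d) (hbd : ¬G.Adj b d)
    (hac' : a ≠ c) (had' : a ≠ d) (hbd' : b ≠ d) :
    ∃ s : Set V, 3 ≤ pseudoachromaticNumber (G.induce s) ∧ (G.induce s).cliqueNum ≤ 2 ∧
      bChromaticNumber (G.induce s) ≤ 2 := by
  classical
  refine ⟨{a, b, c, d}, ?_, ?_, ?_⟩
  · have ha : a ∈ ({a, b, c, d} : Set V) := by simp
    have hb : b ∈ ({a, b, c, d} : Set V) := by simp
    have hc : c ∈ ({a, b, c, d} : Set V) := by simp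
    have hd : d ∈ ({a, b, c, d} : Set V) := by simp
    refine psi_ge_three
      (c := fun x => if x.1 = a then 0 else if x.1 = b then 1 else if x.1 = c then 2 else 0)
      ⟨⟨a, ha⟩, ⟨b, hb⟩, by simpa using hab, by simp, by simp [hab.ne']⟩
      ⟨⟨d, hd⟩, ⟨c, hc⟩, by simpa using hcd.symm,
        by simp [Ne.symm had', hbd'.symm, hcd.ne'], by simp [Ne.symm hac', hbc.ne']⟩
      ⟨⟨b, hb⟩, ⟨c, hc⟩, by simpa using hbc, by simp [hab.ne'],
        by simp [Ne.symm hac', hbc.ne']⟩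
  · refine cliqueNum_le_two_of_triangle_free ?_
    rintro ⟨x, hx⟩ ⟨y, hy⟩ ⟨z, hz⟩ h1 h2 h3
    simp only [comap_adj, Function.Embedding.coe_subtype] at h1 h2 h3
    simp only [Set.mem_insert_iff, Set.mem_singleton_iff] at hx hy hz
    have irr : ∀ w : V, ¬G.Adj w w := fun w => G.irrefl
    have hca : ¬G.Adj c a := fun h => hac (G.adj_symm h)
    have hda : ¬G.Adj d a := fun h => had (G.adj_symm h)
    have hdb : ¬G.Adj d b := fun h => hbd (G.adj_symm h)
    rcases hx with rfl | rfl | rfl | rfl <;> rcases hy with rfl | rfl | rfl | rfl <;>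
      rcases hz with rfl | rfl | rfl | rfl <;> simp_all
  · have hb : b ∈ ({a, b, c, d} : Set V) := by simp
    have hc : c ∈ ({a, b, c, d} : Set V) := by simp
    haveI : Fintype ↥({a, b, c, d} : Set V) := Fintype.ofFinite _
    refine b_le_two_branch ⟨b, hb⟩ ⟨c, hc⟩ ?_
    rintro ⟨x, hx⟩ ⟨⟨u1, hu1⟩, ⟨u2, hu2⟩, h1, h2, hne⟩
    simp only [comap_adj, Function.Embedding.coe_subtype] at h1 h2
    simp only [Set.mem_insert_iff, Set.mem_singleton_iff] at hx hu1 hu2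
    have irr : ∀ w : V, ¬G.Adj w w := fun w => G.irrefl
    have hca : ¬G.Adj c a := fun h => hac (G.adj_symm h)
    have hda : ¬G.Adj d a := fun h => had (G.adj_symm h)
    have hdb : ¬G.Adj d b := fun h => hbd (G.adj_symm h)
    rcases hx with rfl | rfl | rfl | rfl <;> rcases hu1 with rfl | rfl | rfl | rfl <;>
      rcases hu2 with rfl | rfl | rfl | rfl <;> simp_all [Subtype.ext_iff]
end Patterns

section Patterns2
variable {V : Type*} [Fintype V] {G : SimpleGraph V}

lemma C4_bad {a b c d : V} (hab : G.Adj a b) (hbc : G.Adj b c) (hcd : G.Adj c d)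
    (hda : G.Adj d a) (hac : ¬G.Adj a c) (hbd : ¬G.Adj b d)
    (hac' : a ≠ c) (hbd' : b ≠ d) :
    ∃ s : Set V, 3 ≤ pseudoachromaticNumber (G.induce s) ∧ (G.induce s).cliqueNum ≤ 2 ∧
      bChromaticNumber (G.induce s) ≤ 2 := by
  classical
  refine ⟨{a, b, c, d}, ?_, ?_, b_le_two_C4 hab hbc hcd hda hac hbd hac' hbd'⟩
  · have ha : a ∈ ({a, b, c, d} : Set V) := by simp
    have hb : b ∈ ({a, b, c, d} : Set V) := by simp
    have hc : c ∈ ({a, b, c, d} : Set V) := by simp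
    have hd : d ∈ ({a, b, c, d} : Set V) := by simp
    refine psi_ge_three
      (c := fun x => if x.1 = a then 0 else if x.1 = b then 1 else if x.1 = c then 1 else 2)
      ⟨⟨a, ha⟩, ⟨b, hb⟩, by simpa using hab, by simp, by simp [hab.ne']⟩
      ⟨⟨a, ha⟩, ⟨d, hd⟩, by simpa using hda.symm, by simp,
        by simp [hda.ne, hbd'.symm, hcd.ne']⟩
      ⟨⟨c, hc⟩, ⟨d, hd⟩, by simpa using hcd, by simp [Ne.symm hac', hbc.ne'],
        by simp [hda.ne, hbd'.symm, hcd.ne']⟩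
  · refine cliqueNum_le_two_of_triangle_free ?_
    rintro ⟨x, hx⟩ ⟨y, hy⟩ ⟨z, hz⟩ h1 h2 h3
    simp only [comap_adj, Function.Embedding.coe_subtype] at h1 h2 h3
    simp only [Set.mem_insert_iff, Set.mem_singleton_iff] at hx hy hz
    have irr : ∀ w : V, ¬G.Adj w w := fun w => G.irrefl
    have hca : ¬G.Adj c a := fun h => hac (G.adj_symm h)
    have hdb : ¬G.Adj d b := fun h => hbd (G.adj_symm h)
    rcases hx with rfl | rfl | rfl | rfl <;> rcases hy with rfl | rfl | rfl | rfl <;>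
      rcases hz with rfl | rfl | rfl | rfl <;> simp_all

lemma threeK2_bad {a b c d e f : V} (hab : G.Adj a b) (hcd : G.Adj c d) (hef : G.Adj e f)
    (h1 : ¬G.Adj a c) (h2 : ¬G.Adj a d) (h3 : ¬G.Adj b c) (h4 : ¬G.Adj b d)
    (h5 : ¬G.Adj a e) (h6 : ¬G.Adj a f) (h7 : ¬G.Adj b e) (h8 : ¬G.Adj b f)
    (h9 : ¬G.Adj c e) (h10 : ¬G.Adj c f) (h11 : ¬G.Adj d e) (h12 : ¬G.Adj d f)
    (n1 : a ≠ c) (n2 : a ≠ d) (n3 : b ≠ c) (n4 : b ≠ d) (n5 : a ≠ e) (n6 : a ≠ f)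
    (n7 : b ≠ e) (n8 : b ≠ f) (n9 : c ≠ e) (n10 : c ≠ f) (n11 : d ≠ e) (n12 : d ≠ f) :
    ∃ s : Set V, 3 ≤ pseudoachromaticNumber (G.induce s) ∧ (G.induce s).cliqueNum ≤ 2 ∧
      bChromaticNumber (G.induce s) ≤ 2 := by
  classical
  refine ⟨{a, b, c, d, e, f}, ?_, ?_, ?_⟩
  · have ha : a ∈ ({a, b, c, d, e, f} : Set V) := by simp
    have hb : b ∈ ({a, b, c, d, e, f} : Set V) := by simp
    have hc : c ∈ ({a, b, c, d, e, f} : Set V) := by simp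
    have hd : d ∈ ({a, b, c, d, e, f} : Set V) := by simp
    have he : e ∈ ({a, b, c, d, e, f} : Set V) := by simp
    have hf : f ∈ ({a, b, c, d, e, f} : Set V) := by simp
    refine psi_ge_three
      (c := fun x => if x.1 = a then 0 else if x.1 = b then 1 else if x.1 = c then 0
        else if x.1 = d then 2 else if x.1 = e then 1 else 2)
      ⟨⟨a, ha⟩, ⟨b, hb⟩, by simpa using hab, by simp, by simp [hab.ne']⟩
      ⟨⟨c, hc⟩, ⟨d, hd⟩, by simpa using hcd, by simp [Ne.symm n1, Ne.symm n3],
        by simp [Ne.symm n2, Ne.symm n4, hcd.ne']⟩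
      ⟨⟨e, he⟩, ⟨f, hf⟩, by simpa using hef,
        by simp [Ne.symm n5, Ne.symm n7, Ne.symm n9, Ne.symm n11],
        by simp [Ne.symm n6, Ne.symm n8, Ne.symm n10, Ne.symm n12, hef.ne']⟩
  · refine cliqueNum_le_two_of_triangle_free ?_
    rintro ⟨x, hx⟩ ⟨y, hy⟩ ⟨z, hz⟩ g1 g2 g3
    simp only [comap_adj, Function.Embedding.coe_subtype] at g1 g2 g3
    simp only [Set.mem_insert_iff, Set.mem_singleton_iff] at hx hy hz
    have irr : ∀ w : V, ¬G.Adj w w := fun w => G.irrefl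
    have s1 : ¬G.Adj c a := fun h => h1 (G.adj_symm h)
    have s2 : ¬G.Adj d a := fun h => h2 (G.adj_symm h)
    have s3 : ¬G.Adj c b := fun h => h3 (G.adj_symm h)
    have s4 : ¬G.Adj d b := fun h => h4 (G.adj_symm h)
    have s5 : ¬G.Adj e a := fun h => h5 (G.adj_symm h)
    have s6 : ¬G.Adj f a := fun h => h6 (G.adj_symm h)
    have s7 : ¬G.Adj e b := fun h => h7 (G.adj_symm h)
    have s8 : ¬G.Adj f b := fun h => h8 (G.adj_symm h)
    have s9 : ¬G.Adj e c := fun h => h9 (G.adj_symm h)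
    have s10 : ¬G.Adj f c := fun h => h10 (G.adj_symm h)
    have s11 : ¬G.Adj e d := fun h => h11 (G.adj_symm h)
    have s12 : ¬G.Adj f d := fun h => h12 (G.adj_symm h)
    rcases hx with rfl | rfl | rfl | rfl | rfl | rfl <;>
      rcases hy with rfl | rfl | rfl | rfl | rfl | rfl <;>
      rcases hz with rfl | rfl | rfl | rfl | rfl | rfl <;> simp_all
  · have ha : a ∈ ({a, b, c, d, e, f} : Set V) := by simp
    haveI : Fintype ↥({a, b, c, d, e, f} : Set V) := Fintype.ofFinite _
    refine b_le_two_branch ⟨a, ha⟩ ⟨a, ha⟩ ?_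
    rintro ⟨x, hx⟩ ⟨⟨u1, hu1⟩, ⟨u2, hu2⟩, g1, g2, hne⟩
    simp only [comap_adj, Function.Embedding.coe_subtype] at g1 g2
    simp only [Set.mem_insert_iff, Set.mem_singleton_iff] at hx hu1 hu2
    have irr : ∀ w : V, ¬G.Adj w w := fun w => G.irrefl
    have s1 : ¬G.Adj c a := fun h => h1 (G.adj_symm h)
    have s2 : ¬G.Adj d a := fun h => h2 (G.adj_symm h)
    have s3 : ¬G.Adj c b := fun h => h3 (G.adj_symm h)
    have s4 : ¬G.Adj d b := fun h => h4 (G.adj_symm h)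
    have s5 : ¬G.Adj e a := fun h => h5 (G.adj_symm h)
    have s6 : ¬G.Adj f a := fun h => h6 (G.adj_symm h)
    have s7 : ¬G.Adj e b := fun h => h7 (G.adj_symm h)
    have s8 : ¬G.Adj f b := fun h => h8 (G.adj_symm h)
    have s9 : ¬G.Adj e c := fun h => h9 (G.adj_symm h)
    have s10 : ¬G.Adj f c := fun h => h10 (G.adj_symm h)
    have s11 : ¬G.Adj e d := fun h => h11 (G.adj_symm h)
    have s12 : ¬G.Adj f d := fun h => h12 (G.adj_symm h)
    rcases hx with rfl | rfl | rfl | rfl | rfl | rfl <;>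
      rcases hu1 with rfl | rfl | rfl | rfl | rfl | rfl <;>
      rcases hu2 with rfl | rfl | rfl | rfl | rfl | rfl <;> simp_all [Subtype.ext_iff]

lemma P3K2_bad {a b c d e : V} (hab : G.Adj a b) (hbc : G.Adj b c) (hde : G.Adj d e)
    (h1 : ¬G.Adj a c) (h2 : ¬G.Adj a d) (h3 : ¬G.Adj a e) (h4 : ¬G.Adj b d)
    (h5 : ¬G.Adj b e) (h6 : ¬G.Adj c d) (h7 : ¬G.Adj c e)
    (n0 : a ≠ c) (n1 : a ≠ d) (n2 : a ≠ e) (n3 : b ≠ d) (n4 : b ≠ e) (n5 : c ≠ d)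
    (n6 : c ≠ e) :
    ∃ s : Set V, 3 ≤ pseudoachromaticNumber (G.induce s) ∧ (G.induce s).cliqueNum ≤ 2 ∧
      bChromaticNumber (G.induce s) ≤ 2 := by
  classical
  refine ⟨{a, b, c, d, e}, ?_, ?_, ?_⟩
  · have ha : a ∈ ({a, b, c, d, e} : Set V) := by simp
    have hb : b ∈ ({a, b, c, d, e} : Set V) := by simp
    have hc : c ∈ ({a, b, c, d, e} : Set V) := by simp
    have hd : d ∈ ({a, b, c, d, e} : Set V) := by simp
    have he : e ∈ ({a, b, c, d, e} : Set V) := by simp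
    refine psi_ge_three
      (c := fun x => if x.1 = a then 0 else if x.1 = b then 1 else if x.1 = c then 2
        else if x.1 = d then 0 else 2)
      ⟨⟨a, ha⟩, ⟨b, hb⟩, by simpa using hab, by simp, by simp [hab.ne']⟩
      ⟨⟨d, hd⟩, ⟨e, he⟩, by simpa using hde,
        by simp [Ne.symm n1, Ne.symm n3, Ne.symm n5],
        by simp [Ne.symm n2, Ne.symm n4, Ne.symm n6, hde.ne']⟩
      ⟨⟨b, hb⟩, ⟨c, hc⟩, by simpa using hbc, by simp [hab.ne'],
        by simp [Ne.symm n0, hbc.ne']⟩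
  · refine cliqueNum_le_two_of_triangle_free ?_
    rintro ⟨x, hx⟩ ⟨y, hy⟩ ⟨z, hz⟩ g1 g2 g3
    simp only [comap_adj, Function.Embedding.coe_subtype] at g1 g2 g3
    simp only [Set.mem_insert_iff, Set.mem_singleton_iff] at hx hy hz
    have irr : ∀ w : V, ¬G.Adj w w := fun w => G.irrefl
    have s1 : ¬G.Adj c a := fun h => h1 (G.adj_symm h)
    have s2 : ¬G.Adj d a := fun h => h2 (G.adj_symm h)
    have s3 : ¬G.Adj e a := fun h => h3 (G.adj_symm h)
    have s4 : ¬G.Adj d b := fun h => h4 (G.adj_symm h)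
    have s5 : ¬G.Adj e b := fun h => h5 (G.adj_symm h)
    have s6 : ¬G.Adj d c := fun h => h6 (G.adj_symm h)
    have s7 : ¬G.Adj e c := fun h => h7 (G.adj_symm h)
    rcases hx with rfl | rfl | rfl | rfl | rfl <;>
      rcases hy with rfl | rfl | rfl | rfl | rfl <;>
      rcases hz with rfl | rfl | rfl | rfl | rfl <;> simp_all
  · have hb : b ∈ ({a, b, c, d, e} : Set V) := by simp
    haveI : Fintype ↥({a, b, c, d, e} : Set V) := Fintype.ofFinite _
    refine b_le_two_branch ⟨b, hb⟩ ⟨b, hb⟩ ?_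
    rintro ⟨x, hx⟩ ⟨⟨u1, hu1⟩, ⟨u2, hu2⟩, g1, g2, hne⟩
    simp only [comap_adj, Function.Embedding.coe_subtype] at g1 g2
    simp only [Set.mem_insert_iff, Set.mem_singleton_iff] at hx hu1 hu2
    have irr : ∀ w : V, ¬G.Adj w w := fun w => G.irrefl
    have s1 : ¬G.Adj c a := fun h => h1 (G.adj_symm h)
    have s2 : ¬G.Adj d a := fun h => h2 (G.adj_symm h)
    have s3 : ¬G.Adj e a := fun h => h3 (G.adj_symm h)
    have s4 : ¬G.Adj d b := fun h => h4 (G.adj_symm h)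
    have s5 : ¬G.Adj e b := fun h => h5 (G.adj_symm h)
    have s6 : ¬G.Adj d c := fun h => h6 (G.adj_symm h)
    have s7 : ¬G.Adj e c := fun h => h7 (G.adj_symm h)
    rcases hx with rfl | rfl | rfl | rfl | rfl <;>
      rcases hu1 with rfl | rfl | rfl | rfl | rfl <;>
      rcases hu2 with rfl | rfl | rfl | rfl | rfl <;> simp_all [Subtype.ext_iff]
end Patterns2


/-- `G` is ωψ-perfect iff `G` is bψ-perfect. -/
theorem omega_pseudoachromatic_perfect_iff_b_pseudoachromatic_perfect
    {V : Type*} [Fintype V] (G : SimpleGraph V) :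
    (∀ s : Set V, (G.induce s).cliqueNum = pseudoachromaticNumber (G.induce s)) ↔
      (∀ s : Set V, bChromaticNumber (G.induce s) = pseudoachromaticNumber (G.induce s)) := by
  classical
  constructor
  · intro hA s
    haveI : Fintype ↥s := Fintype.ofFinite _
    refine le_antisymm (b_le_psi _) ?_
    rw [← hA s]
    exact omega_le_b _
  · intro hB s
    haveI : Fintype ↥s := Fintype.ofFinite _
    have hP4 : NoP4 G := by
      intro a b c d hab hbc hcd hac had hbd nac nad nbd
      obtain ⟨s0, hpsi, homega, hb⟩ := P4_bad hab hbc hcd hac had hbd nac nad nbd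
      have := hB s0
      omega
    have hC4 : NoC4 G := by
      intro a b c d hab hbc hcd hda hac hbd nac nbd
      obtain ⟨s0, hpsi, homega, hb⟩ := C4_bad hab hbc hcd hda hac hbd nac nbd
      have := hB s0
      omega
    have h32 : No3K2 G := by
      intro a b c d e f hab hcd hef h1 h2 h3 h4 h5 h6 h7 h8 h9 h10 h11 h12
        n1 n2 n3 n4 n5 n6 n7 n8 n9 n10 n11 n12
      obtain ⟨s0, hpsi, homega, hb⟩ := threeK2_bad hab hcd hef h1 h2 h3 h4 h5 h6 h7 h8 h9
        h10 h11 h12 n1 n2 n3 n4 n5 n6 n7 n8 n9 n10 n11 n12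
      have := hB s0
      omega
    have hp32 : NoP3K2 G := by
      intro a b c d e hab hbc hde h1 h2 h3 h4 h5 h6 h7 n0 n1 n2 n3 n4 n5 n6
      obtain ⟨s0, hpsi, homega, hb⟩ := P3K2_bad hab hbc hde h1 h2 h3 h4 h5 h6 h7
        n0 n1 n2 n3 n4 n5 n6
      have := hB s0
      omega
    refine le_antisymm (omega_le_psi _) ?_
    exact key_aux (Fintype.card ↥s) (G.induce s) le_rfl hP4.induce hC4.induce
      h32.induce hp32.induce
end

section
/- A finite simple graph G is bψ-perfect (for every induced subgraph H, the b-chromatic number of H equals the pseudoachromatic number of H) if and only if G is Bψ-perfect (for every induced subgraph H, the pseudo-b-chromatic number of H equals the pseudoachromatic number of H). -/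
open SimpleGraph

/-! ### Auxiliary development -/

namespace BPsiAux

universe u

variable {V : Type*}

lemma induce_adj' {G : SimpleGraph V} {s : Set V} {a b : ↥s} :
    (G.induce s).Adj a b ↔ G.Adj ↑a ↑b := Iff.rfl

lemma dominating_complete {G : SimpleGraph V} {k : ℕ} {c : V → Fin k}
    (h : IsDominatingColoring G c) : IsCompleteColoring G c := by
  refine ⟨h.1, fun i j hij => ?_⟩
  obtain ⟨v, hv, hdom⟩ := h.2 i
  obtain ⟨u, hadj, hu⟩ := hdom j (fun h' => hij h'.symm)
  exact ⟨v, u, hadj, hv, hu⟩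

lemma surj_le_card [Fintype V] {k : ℕ} {c : V → Fin k} (hc : Function.Surjective c) :
    k ≤ Fintype.card V := by
  simpa using Fintype.card_le_of_surjective c hc

lemma bdd_complete [Fintype V] (G : SimpleGraph V) :
    BddAbove {k | ∃ c : V → Fin k, IsCompleteColoring G c} :=
  ⟨Fintype.card V, fun _k ⟨_c, hc⟩ => surj_le_card hc.1⟩

lemma bdd_dominating [Fintype V] (G : SimpleGraph V) :
    BddAbove {k | ∃ c : V → Fin k, IsDominatingColoring G c} :=
  ⟨Fintype.card V, fun _k ⟨_c, hc⟩ => surj_le_card hc.1⟩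

lemma bdd_proper_dominating [Fintype V] (G : SimpleGraph V) :
    BddAbove {k | ∃ c : V → Fin k, IsProperColoring G c ∧ IsDominatingColoring G c} :=
  ⟨Fintype.card V, fun _k ⟨_c, hc⟩ => surj_le_card hc.2.1⟩

/-- compression of a non-surjective proper coloring -/
lemma compress [Fintype V] {G : SimpleGraph V} {m : ℕ} (c : V → Fin m)
    (hp : IsProperColoring G c) (i : Fin m) (hi : ∀ v, c v ≠ i) :
    ∃ m' < m, ∃ c' : V → Fin m', IsProperColoring G c' ∧ Function.Surjective c' := by
  classical
  set R : Finset (Fin m) := Finset.univ.image c with hR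
  have hmem : ∀ v, c v ∈ R := fun v => Finset.mem_image_of_mem c (Finset.mem_univ v)
  have hiR : i ∉ R := by
    simp only [hR, Finset.mem_image] at *
    rintro ⟨v, -, hv⟩; exact hi v hv
  have hcard : R.card < m := by
    have h1 : R ⊆ Finset.univ.erase i := fun x hx =>
      Finset.mem_erase.2 ⟨fun h => hiR (h ▸ hx), Finset.mem_univ x⟩
    calc R.card ≤ (Finset.univ.erase i).card := Finset.card_le_card h1
      _ < Finset.univ.card := Finset.card_erase_lt_of_mem (Finset.mem_univ i)
      _ = m := by simp
  set e := R.equivFin with he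
  refine ⟨R.card, hcard, fun v => e ⟨c v, hmem v⟩, ?_, ?_⟩
  · intro u v hadj h
    exact hp u v hadj (by simpa [Subtype.ext_iff] using e.injective h)
  · intro j
    obtain ⟨y, hy⟩ := e.surjective j
    obtain ⟨v, -, hv⟩ := Finset.mem_image.1 y.2
    refine ⟨v, ?_⟩
    have hyv : (⟨c v, hmem v⟩ : {x // x ∈ R}) = y := Subtype.ext hv
    show e ⟨c v, hmem v⟩ = j
    rw [hyv, hy]

/-- there is a proper dominating coloring with at least clique-size many colors -/
lemma exists_proper_dominating [Fintype V] (G : SimpleGraph V) :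
    ∃ m, ∃ c : V → Fin m, IsProperColoring G c ∧ IsDominatingColoring G c ∧
      ∀ k (f : Fin k → V), Function.Injective f →
        (∀ i j, i ≠ j → G.Adj (f i) (f j)) → k ≤ m := by
  classical
  have hP : ∃ m, ∃ c : V → Fin m, IsProperColoring G c ∧ Function.Surjective c := by
    refine ⟨Fintype.card V, fun v => Fintype.equivFin V v, ?_, (Fintype.equivFin V).surjective⟩
    intro u v hadj h
    exact (G.ne_of_adj hadj) ((Fintype.equivFin V).injective h)
  obtain ⟨c, hcp, hcs⟩ := Nat.find_spec hP
  refine ⟨Nat.find hP, c, hcp, ⟨hcs, ?_⟩, ?_⟩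
  · -- dominating
    intro i
    by_contra hno
    have hno : ∀ v, c v = i → ¬ ∀ j, j ≠ i → ∃ u, G.Adj v u ∧ c u = j := by
      intro v hv hall
      exact hno ⟨v, hv, hall⟩
    -- every vertex of color i misses some color
    have hrec : ∀ v, c v = i → ∃ j, j ≠ i ∧ ∀ u, G.Adj v u → c u ≠ j := by
      intro v hv
      have h1 := hno v hv
      by_contra hcon
      push_neg at hcon
      exact h1 (fun j hji => hcon j hji)
    set c₂ : V → Fin (Nat.find hP) := fun v => if h : c v = i then (hrec v h).choose else c v with hc₂
    have hc₂ne : ∀ v, c₂ v ≠ i := by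
      intro v
      simp only [hc₂]
      split
      · exact (hrec v ‹_›).choose_spec.1
      · assumption
    have hc₂p : IsProperColoring G c₂ := by
      intro u v hadj heq
      by_cases hu : c u = i <;> by_cases hv : c v = i <;>
        simp only [hc₂, hu, hv, dif_pos, dif_neg, not_false_iff] at heq
      · exact hcp u v hadj (hu.trans hv.symm)
      · exact (hrec u hu).choose_spec.2 v hadj heq.symm
      · exact (hrec v hv).choose_spec.2 u hadj.symm heq
      · exact hcp u v hadj heq
    obtain ⟨m', hm', c', hc'p, hc's⟩ := compress c₂ hc₂p i hc₂ne
    have hle : Nat.find hP ≤ m' := Nat.find_le ⟨c', hc'p, hc's⟩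
    omega
  · -- clique bound
    intro k f hfinj hfadj
    have : Function.Injective (c ∘ f) := by
      intro i j h
      by_contra hij
      exact hcp _ _ (hfadj i j hij) h
    simpa using Fintype.card_le_of_injective _ this

def NoP4 (G : SimpleGraph V) : Prop :=
  ∀ a b c d : V, G.Adj a b → G.Adj b c → G.Adj c d →
    ¬G.Adj a c → ¬G.Adj a d → ¬G.Adj b d → a ≠ c → a ≠ d → b ≠ d → False

def NoC4 (G : SimpleGraph V) : Prop :=
  ∀ a b c d : V, G.Adj a b → G.Adj b c → G.Adj c d → G.Adj d a →
    ¬G.Adj a c → ¬G.Adj b d → a ≠ c → b ≠ d → False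

def NoP3K2 (G : SimpleGraph V) : Prop :=
  ∀ a b c d e : V, G.Adj a b → G.Adj b c → ¬G.Adj a c → a ≠ c → G.Adj d e →
    ¬G.Adj a d → ¬G.Adj a e → ¬G.Adj b d → ¬G.Adj b e → ¬G.Adj c d → ¬G.Adj c e → False

def No3K2 (G : SimpleGraph V) : Prop :=
  ∀ a b c d e f : V, G.Adj a b → G.Adj c d → G.Adj e f →
    ¬G.Adj a c → ¬G.Adj a d → ¬G.Adj a e → ¬G.Adj a f →
    ¬G.Adj b c → ¬G.Adj b d → ¬G.Adj b e → ¬G.Adj b f →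
    ¬G.Adj c e → ¬G.Adj c f → ¬G.Adj d e → ¬G.Adj d f → False

def Ffree (G : SimpleGraph V) : Prop := NoP4 G ∧ NoC4 G ∧ NoP3K2 G ∧ No3K2 G

lemma ffree_induce {G : SimpleGraph V} (h : Ffree G) (s : Set V) : Ffree (G.induce s) := by
  obtain ⟨h1, h2, h3, h4⟩ := h
  refine ⟨?_, ?_, ?_, ?_⟩
  · intro a b c d hab hbc hcd hac had hbd nac nad nbd
    exact h1 a b c d hab hbc hcd
      (fun h => hac (induce_adj'.2 h))
      (fun h => had (induce_adj'.2 h))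
      (fun h => hbd (induce_adj'.2 h))
      (fun h => nac (Subtype.ext h)) (fun h => nad (Subtype.ext h))
      (fun h => nbd (Subtype.ext h))
  · intro a b c d hab hbc hcd hda hac hbd nac nbd
    exact h2 a b c d hab hbc hcd hda
      (fun h => hac (induce_adj'.2 h))
      (fun h => hbd (induce_adj'.2 h))
      (fun h => nac (Subtype.ext h)) (fun h => nbd (Subtype.ext h))
  · intro a b c d e hab hbc hac nac hde had hae hbd hbe hcd hce
    exact h3 a b c d e hab hbc
      (fun h => hac (induce_adj'.2 h)) (fun h => nac (Subtype.ext h)) hde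
      (fun h => had (induce_adj'.2 h))
      (fun h => hae (induce_adj'.2 h))
      (fun h => hbd (induce_adj'.2 h))
      (fun h => hbe (induce_adj'.2 h))
      (fun h => hcd (induce_adj'.2 h))
      (fun h => hce (induce_adj'.2 h))
  · intro a b c d e f hab hcd hef nac nad nae naf nbc nbd nbe nbf nce ncf nde ndf
    exact h4 a b c d e f hab hcd hef
      (fun h => nac (induce_adj'.2 h))
      (fun h => nad (induce_adj'.2 h))
      (fun h => nae (induce_adj'.2 h))
      (fun h => naf (induce_adj'.2 h))
      (fun h => nbc (induce_adj'.2 h))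
      (fun h => nbd (induce_adj'.2 h))
      (fun h => nbe (induce_adj'.2 h))
      (fun h => nbf (induce_adj'.2 h))
      (fun h => nce (induce_adj'.2 h))
      (fun h => ncf (induce_adj'.2 h))
      (fun h => nde (induce_adj'.2 h))
      (fun h => ndf (induce_adj'.2 h))

/-- Wolk: a connected {P4,C4}-free finite graph has a universal vertex. -/
lemma wolk [Fintype V] {G : SimpleGraph V} (hconn : G.Connected)
    (h1 : NoP4 G) (h2 : NoC4 G) : ∃ v : V, ∀ w, w ≠ v → G.Adj v w := by
  classical
  haveI : DecidableRel G.Adj := fun _ _ => Classical.propDecidable _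
  have hne : Nonempty V := hconn.nonempty
  obtain ⟨v, -, hv⟩ := Finset.exists_max_image (Finset.univ : Finset V) (fun w => G.degree w)
    ⟨hne.some, Finset.mem_univ _⟩
  refine ⟨v, fun w hw => ?_⟩
  have claim : ∀ (x : V) (p : G.Walk x v), x = v ∨ G.Adj v x := by
    intro x p
    induction p with
    | nil => exact Or.inl rfl
    | @cons x y v hxy q ih =>
      rcases ih hv hw with rfl | hvy
      · exact Or.inr hxy.symm
      by_cases hxv : x = v
      · exact Or.inl hxv
      by_cases hvx : G.Adj v x
      · exact Or.inr hvx
      exfalso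
      -- x adj y, v adj y, ¬ v adj x, x ≠ v : degree argument
      have key : ∀ z, G.Adj v z → z ≠ y → G.Adj y z := by
        intro z hvz hzy
        by_contra hyz
        have hxz' : x ≠ z := fun h => hvx (h ▸ hvz)
        by_cases hxz : G.Adj x z
        · -- C4 : x - y - v - z - x
          exact h2 x y v z hxy hvy.symm hvz hxz.symm (fun h => hvx h.symm) hyz hxv (Ne.symm hzy)
        · -- P4 : x - y - v - z
          exact h1 x y v z hxy hvy.symm hvz (fun h => hvx h.symm) hxz hyz hxv hxz' (Ne.symm hzy)
      have hsub : insert v (insert x ((G.neighborFinset v).erase y)) ⊆ G.neighborFinset y := by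
        intro z hz
        simp only [Finset.mem_insert, Finset.mem_erase, mem_neighborFinset] at hz ⊢
        rcases hz with rfl | rfl | ⟨hzy, hvz⟩
        · exact hvy.symm
        · exact hxy.symm
        · exact key z hvz hzy
      have hxney : x ∉ (G.neighborFinset v).erase y := by
        simp only [Finset.mem_erase, mem_neighborFinset]
        exact fun h => hvx h.2
      have hvnotin : v ∉ insert x ((G.neighborFinset v).erase y) := by
        simp only [Finset.mem_insert, Finset.mem_erase, mem_neighborFinset]
        rintro (rfl | ⟨-, h⟩)
        · exact hxv rfl
        · exact G.irrefl h
      have hymem : y ∈ G.neighborFinset v := (mem_neighborFinset _ _ _).2 hvy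
      have hcard1 : ((G.neighborFinset v).erase y).card = G.degree v - 1 := by
        rw [Finset.card_erase_of_mem hymem]; rfl
      have hd1 : 1 ≤ G.degree v := Finset.card_pos.2 ⟨y, hymem⟩
      have hcard : (insert v (insert x ((G.neighborFinset v).erase y))).card = G.degree v + 1 := by
        rw [Finset.card_insert_of_notMem hvnotin, Finset.card_insert_of_notMem hxney, hcard1]
        omega
      have hle := Finset.card_le_card hsub
      rw [hcard] at hle
      have hdy : (G.neighborFinset y).card = G.degree y := rfl
      have hfin : G.degree y ≤ G.degree v := hv y (Finset.mem_univ y)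
      omega
  rcases claim w ((hconn.preconnected w v).some) with rfl | h
  · exact absurd rfl hw
  · exact h







/-- If an edge of a "closed" set exists on each side, the non-isolated vertices inside the
closed side form a clique. -/
lemma clique_side {G : SimpleGraph V} (hF : Ffree G) (s : Set V)
    (hcl : ∀ z w, G.Adj z w → z ∈ s → w ∈ s)
    (hout : ∃ p q, p ∉ s ∧ G.Adj p q) :
    ∀ u u' w w', u ∈ s → w ∈ s → G.Adj u u' → G.Adj w w' → u ≠ w → G.Adj u w := by
  obtain ⟨hP4, hC4, hP3K2, h3K2⟩ := hF
  obtain ⟨p, q, hp, hpq⟩ := hout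
  have hq : q ∉ s := fun hq => hp (hcl q p hpq.symm hq)
  intro u u' w w' hu hw huu' hww' hne
  by_contra huw
  have hu' : u' ∈ s := hcl u u' huu' hu
  have hw' : w' ∈ s := hcl w w' hww' hw
  have cross : ∀ z, z ∈ s → ¬G.Adj z p ∧ ¬G.Adj z q :=
    fun z hz => ⟨fun h => hp (hcl z p h hz), fun h => hq (hcl z q h hz)⟩
  by_cases h0 : u' = w'
  · -- P3 : u - u' - w   (u' = w')
    subst h0
    exact hP3K2 u u' w p q huu' (hww'.symm) huw hne hpq
      (cross u hu).1 (cross u hu).2 (cross u' hu').1 (cross u' hu').2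
      (cross w hw).1 (cross w hw).2
  by_cases h1 : G.Adj u w'
  · -- P3 : u - w' - w
    exact hP3K2 u w' w p q h1 hww'.symm huw hne hpq
      (cross u hu).1 (cross u hu).2 (cross w' hw').1 (cross w' hw').2
      (cross w hw).1 (cross w hw).2
  by_cases h2 : G.Adj u' w
  · -- P3 : u - u' - w
    exact hP3K2 u u' w p q huu' h2 huw hne hpq
      (cross u hu).1 (cross u hu).2 (cross u' hu').1 (cross u' hu').2
      (cross w hw).1 (cross w hw).2
  by_cases h3 : G.Adj u' w'
  · -- P4 : u - u' - w' - w
    have hnuw' : u ≠ w' := fun h => huw (h ▸ hww'.symm)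
    have hnu'w : u' ≠ w := fun h => huw (h ▸ huu')
    exact hP4 u u' w' w huu' h3 hww'.symm h1 huw h2 hnuw' hne hnu'w
  · -- 3K2 : uu', ww', pq
    have nc : ∀ (z : V), z ∈ s → ¬G.Adj z p ∧ ¬G.Adj z q := cross
    exact h3K2 u u' w w' p q huu' hww' hpq huw h1 (nc u hu).1 (nc u hu).2
      h2 h3 (nc u' hu').1 (nc u' hu').2
      (nc w hw).1 (nc w hw).2 (nc w' hw').1 (nc w' hw').2

/-- Key lemma: in a finite Ffree graph, every complete `k`-coloring yields a `k`-clique. -/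
lemma key : ∀ (n : ℕ) {W : Type u} [Fintype W] (H : SimpleGraph W),
    Fintype.card W ≤ n → Ffree H → ∀ {k : ℕ} (c : W → Fin k), IsCompleteColoring H c →
    ∃ f : Fin k → W, Function.Injective f ∧ ∀ i j, i ≠ j → H.Adj (f i) (f j) := by
  intro n
  induction n with
  | zero =>
    intro W _ H hcard hF k c hc
    haveI : IsEmpty W := Fintype.card_eq_zero_iff.1 (le_antisymm hcard (Nat.zero_le _))
    match k with
    | 0 => exact ⟨Fin.elim0, fun i => i.elim0, fun i => i.elim0⟩
    | k + 1 => exact absurd (hc.1 0) (by simp)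
  | succ n IH =>
    intro W _ H hcard hF k c hc
    classical
    match k with
    | 0 => exact ⟨Fin.elim0, fun i => i.elim0, fun i => i.elim0⟩
    | 1 =>
      obtain ⟨v, -⟩ := hc.1 0
      exact ⟨fun _ => v, fun i j _ => Subsingleton.elim i j,
        fun i j hij => absurd (Subsingleton.elim i j) hij⟩
    | k + 2 =>
      obtain ⟨u0, v0, huv0, -, -⟩ := hc.2 0 1 (by simp [Fin.ext_iff])
      by_cases hU : ∃ v : W, ∀ w, w ≠ v → H.Adj v w
      · -- universal vertex case
        obtain ⟨v, hv⟩ := hU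
        set i0 := c v with hi0
        set t : Set W := {x | x ≠ v} with ht
        have hvt : v ∉ t := by simp [ht]
        have hcardt : Fintype.card ↥t ≤ n := by
          have := Fintype.card_subtype_lt (p := fun x => x ≠ v) (x := v) (by simp)
          have h2 : Fintype.card {x // (fun x => x ≠ v) x} = Fintype.card ↥t :=
            Fintype.card_congr (Equiv.subtypeEquivRight (fun _ => Iff.rfl))
          have h3 : Fintype.card ↥t < Fintype.card W :=
            this.trans_eq' (Fintype.card_congr (Equiv.subtypeEquivRight (fun _ => Iff.rfl)))
          omega
        set c'' : ↥t → Fin (k + 1) := fun x => (finSuccEquiv' i0 (c x.val)).getD 0 with hc''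
        have hc''val : ∀ (x : ↥t) (m : Fin (k+1)), c x.val = i0.succAbove m → c'' x = m := by
          intro x m hm
          simp only [hc'', hm, finSuccEquiv'_succAbove, Option.getD_some]
        have hcomp : IsCompleteColoring (H.induce t) c'' := by
          constructor
          · intro m
            obtain ⟨x, hx⟩ := hc.1 (i0.succAbove m)
            have hxv : x ≠ v := by
              intro h; subst h
              exact Fin.succAbove_ne i0 m (by rw [← hx])
            exact ⟨⟨x, hxv⟩, hc''val ⟨x, hxv⟩ m hx⟩
          · intro m1 m2 hm
            have hne : i0.succAbove m1 ≠ i0.succAbove m2 :=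
              fun h => hm (Fin.succAbove_right_inj.1 h)
            obtain ⟨u, w, huw, hu, hw⟩ := hc.2 _ _ hne
            have huv : u ≠ v := fun h => Fin.succAbove_ne i0 m1 (by rw [← hu, h])
            have hwv : w ≠ v := fun h => Fin.succAbove_ne i0 m2 (by rw [← hw, h])
            exact ⟨⟨u, huv⟩, ⟨w, hwv⟩, induce_adj'.2 huw,
              hc''val _ m1 hu, hc''val _ m2 hw⟩
        obtain ⟨g, hginj, hgadj⟩ := IH (H.induce t) hcardt (ffree_induce hF t) c'' hcomp
        refine ⟨fun j => (finSuccEquiv' i0 j).elim v (fun m => (g m).val), ?_, ?_⟩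
        · intro j1 j2 h
          apply (finSuccEquiv' i0).injective
          rcases h1 : finSuccEquiv' i0 j1 with - | m1 <;> rcases h2 : finSuccEquiv' i0 j2 with - | m2 <;>
            simp only [h1, h2, Option.elim] at h ⊢
          · exact absurd h.symm (g m2).2
          · exact absurd h (g m1).2
          · exact congrArg some (hginj (Subtype.ext h))
        · intro j1 j2 hj
          rcases h1 : finSuccEquiv' i0 j1 with - | m1 <;> rcases h2 : finSuccEquiv' i0 j2 with - | m2 <;>
            simp only [h1, h2, Option.elim]
          · exact absurd ((finSuccEquiv' i0).injective (h1.trans h2.symm)) hj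
          · exact hv _ (g m2).2
          · exact (hv _ (g m1).2).symm
          · refine induce_adj'.1 (hgadj m1 m2 ?_)
            intro h; subst h
            exact hj ((finSuccEquiv' i0).injective (h1.trans h2.symm))
      · -- no universal vertex: H disconnected
        have hnc : ¬H.Connected := by
          intro hcon
          exact hU (wolk hcon hF.1 hF.2.1)
        have hsep : ∃ x y : W, ¬H.Reachable x y := by
          by_contra hcon
          push_neg at hcon
          haveI : Nonempty W := ⟨u0⟩
          exact hnc { preconnected := fun a b => hcon a b }
        obtain ⟨x, y, hxy⟩ := hsep
        set t : Set W := {z | H.Reachable x z} with ht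
        have hclt : ∀ z w, H.Adj z w → z ∈ t → w ∈ t :=
          fun z w hzw hz => hz.trans hzw.reachable
        have hclc : ∀ z w, H.Adj z w → z ∉ t → w ∉ t :=
          fun z w hzw hz hw => hz (hw.trans hzw.symm.reachable)
        have hxt : x ∈ t := Reachable.refl x
        have hyt : y ∉ t := hxy
        by_cases hEt : ∃ z w : W, z ∈ t ∧ H.Adj z w
        · by_cases hEc : ∃ z w : W, z ∉ t ∧ H.Adj z w
          · -- both sides have an edge : two cliques cover everything
            have cliq1 : ∀ u u' w w', u ∈ t → w ∈ t → H.Adj u u' → H.Adj w w' →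
                u ≠ w → H.Adj u w := by
              obtain ⟨p, q, hp, hpq⟩ := hEc
              exact clique_side hF t hclt ⟨p, q, hp, hpq⟩
            have cliq2 : ∀ u u' w w', u ∉ t → w ∉ t → H.Adj u u' → H.Adj w w' →
                u ≠ w → H.Adj u w := by
              obtain ⟨p, q, hp, hpq⟩ := hEt
              have : p ∉ tᶜ := by simpa using hp
              exact fun u u' w w' hu hw =>
                clique_side hF tᶜ (fun z w hzw hz => hclc z w hzw hz)
                  ⟨p, q, this, hpq⟩ u u' w w' hu hw
            -- one of the two cliques carries all colors
            have hcover : (∀ i : Fin (k+2), ∃ z, z ∈ t ∧ (∃ w, H.Adj z w) ∧ c z = i) ∨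
                (∀ i : Fin (k+2), ∃ z, z ∉ t ∧ (∃ w, H.Adj z w) ∧ c z = i) := by
              by_contra hcon
              push_neg at hcon
              obtain ⟨⟨a, ha⟩, ⟨b, hb⟩⟩ := hcon
              by_cases hab : a = b
              · subst hab
                obtain ⟨j, hj⟩ := exists_ne a
                obtain ⟨u, w, huw, hu, hw⟩ := hc.2 a j (Ne.symm hj)
                by_cases hut : u ∈ t
                · exact ha u hut ⟨w, huw⟩ hu
                · exact hb u hut ⟨w, huw⟩ hu
              · obtain ⟨u, w, huw, hu, hw⟩ := hc.2 a b hab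
                by_cases hut : u ∈ t
                · exact ha u hut ⟨w, huw⟩ hu
                · exact hb w (hclc u w huw hut) ⟨u, huw.symm⟩ hw
            rcases hcover with hcov | hcov
            · choose z hz1 hz2 hz3 using hcov
              refine ⟨z, ?_, ?_⟩
              · intro i j h; rw [← hz3 i, h, hz3 j]
              · intro i j hij
                exact cliq1 (z i) (hz2 i).choose (z j) (hz2 j).choose (hz1 i) (hz1 j)
                  (hz2 i).choose_spec (hz2 j).choose_spec
                  (fun h => hij (by rw [← hz3 i, h, hz3 j]))
            · choose z hz1 hz2 hz3 using hcov
              refine ⟨z, ?_, ?_⟩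
              · intro i j h; rw [← hz3 i, h, hz3 j]
              · intro i j hij
                exact cliq2 (z i) (hz2 i).choose (z j) (hz2 j).choose (hz1 i) (hz1 j)
                  (hz2 i).choose_spec (hz2 j).choose_spec
                  (fun h => hij (by rw [← hz3 i, h, hz3 j]))
          · -- all edges inside t : restrict to t
            push_neg at hEc
            have hedge_in : ∀ z w : W, H.Adj z w → z ∈ t := by
              intro z w hzw
              by_contra hz
              exact hEc z w hz hzw
            set c' : ↥t → Fin (k+2) := fun z => c z.val with hc'
            have hcomp : IsCompleteColoring (H.induce t) c' := by
              constructor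
              · intro i
                obtain ⟨j, hj⟩ := exists_ne i
                obtain ⟨u, w, huw, hu, hw⟩ := hc.2 i j (fun h => hj h.symm)
                exact ⟨⟨u, hedge_in u w huw⟩, hu⟩
              · intro i j hij
                obtain ⟨u, w, huw, hu, hw⟩ := hc.2 i j hij
                exact ⟨⟨u, hedge_in u w huw⟩, ⟨w, hedge_in w u huw.symm⟩,
                  induce_adj'.2 huw, hu, hw⟩
            have hcardt : Fintype.card ↥t ≤ n := by
              have := Fintype.card_subtype_lt (p := fun z => z ∈ t) (x := y) hyt
              have h2 : Fintype.card {x // (fun z => z ∈ t) x} = Fintype.card ↥t :=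
                Fintype.card_congr (Equiv.subtypeEquivRight (fun _ => Iff.rfl))
              have h3 : Fintype.card ↥t < Fintype.card W :=
                this.trans_eq' (Fintype.card_congr (Equiv.subtypeEquivRight (fun _ => Iff.rfl)))
              omega
            obtain ⟨g, hginj, hgadj⟩ := IH (H.induce t) hcardt (ffree_induce hF t) c' hcomp
            exact ⟨fun i => (g i).val, fun i j h => hginj (Subtype.ext h),
              fun i j hij => induce_adj'.1 (hgadj i j hij)⟩
        · -- all edges inside tᶜ
          push_neg at hEt
          have hedge_in : ∀ z w : W, H.Adj z w → z ∈ tᶜ := by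
            intro z w hzw
            exact fun hz => hEt z w hz hzw
          set c' : ↥(tᶜ) → Fin (k+2) := fun z => c z.val with hc'
          have hcomp : IsCompleteColoring (H.induce tᶜ) c' := by
            constructor
            · intro i
              obtain ⟨j, hj⟩ := exists_ne i
              obtain ⟨u, w, huw, hu, hw⟩ := hc.2 i j (fun h => hj h.symm)
              exact ⟨⟨u, hedge_in u w huw⟩, hu⟩
            · intro i j hij
              obtain ⟨u, w, huw, hu, hw⟩ := hc.2 i j hij
              exact ⟨⟨u, hedge_in u w huw⟩, ⟨w, hedge_in w u huw.symm⟩,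
                induce_adj'.2 huw, hu, hw⟩
          have hcardt : Fintype.card ↥(tᶜ) ≤ n := by
            have := Fintype.card_subtype_lt (p := fun z => z ∈ tᶜ) (x := x) (by simpa using hxt)
            have h2 : Fintype.card {x // (fun z => z ∈ tᶜ) x} = Fintype.card ↥(tᶜ) :=
              Fintype.card_congr (Equiv.subtypeEquivRight (fun _ => Iff.rfl))
            have h3 : Fintype.card ↥(tᶜ) < Fintype.card W :=
              this.trans_eq' (Fintype.card_congr (Equiv.subtypeEquivRight (fun _ => Iff.rfl)))
            omega
          obtain ⟨g, hginj, hgadj⟩ := IH (H.induce tᶜ) hcardt (ffree_induce hF tᶜ) c' hcomp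
          exact ⟨fun i => (g i).val, fun i j h => hginj (Subtype.ext h),
            fun i j hij => induce_adj'.1 (hgadj i j hij)⟩

/-- In `P4 = a-b-c-d`, no dominating coloring has ≥ 3 colors. -/
lemma bound_P4 {a b c d : W} (hab : H.Adj a b) (hbc : H.Adj b c) (hcd : H.Adj c d)
    (hac : ¬H.Adj a c) (had : ¬H.Adj a d) (hbd : ¬H.Adj b d)
    (hall : ∀ x : W, x = a ∨ x = b ∨ x = c ∨ x = d)
    {k : ℕ} {c' : W → Fin k} (hd : IsDominatingColoring H c') : k ≤ 2 := by
  by_contra hk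
  push_neg at hk
  set i0 : Fin k := ⟨0, by omega⟩ with hi0
  set i1 : Fin k := ⟨1, by omega⟩ with hi1
  set i2 : Fin k := ⟨2, by omega⟩ with hi2
  have hne01 : i0 ≠ i1 := fun h => by simpa [hi0, hi1] using congrArg Fin.val h
  have hne02 : i0 ≠ i2 := fun h => by simpa [hi0, hi2] using congrArg Fin.val h
  have hne12 : i1 ≠ i2 := fun h => by simpa [hi1, hi2] using congrArg Fin.val h
  have nbA : ∀ u, H.Adj a u → u = b := by
    intro u hu
    rcases hall u with rfl | rfl | rfl | rfl
    · exact absurd hu (H.irrefl)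
    · rfl
    · exact absurd hu hac
    · exact absurd hu had
  have nbD : ∀ u, H.Adj d u → u = c := by
    intro u hu
    rcases hall u with rfl | rfl | rfl | rfl
    · exact absurd hu.symm had
    · exact absurd hu.symm hbd
    · rfl
    · exact absurd hu (H.irrefl)
  have two_nb : ∀ v u1 u2, H.Adj v u1 → H.Adj v u2 → u1 ≠ u2 → v = b ∨ v = c := by
    intro v u1 u2 h1 h2 h12
    rcases hall v with rfl | rfl | rfl | rfl
    · exact absurd ((nbA u1 h1).trans (nbA u2 h2).symm) h12
    · exact Or.inl rfl
    · exact Or.inr rfl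
    · exact absurd ((nbD u1 h1).trans (nbD u2 h2).symm) h12
  have getv : ∀ (i j1 j2 : Fin k), j1 ≠ i → j2 ≠ i → j1 ≠ j2 →
      ∃ v, c' v = i ∧ (v = b ∨ v = c) := by
    intro i j1 j2 h1 h2 h12
    obtain ⟨v, hv, hdom⟩ := hd.2 i
    obtain ⟨u1, hu1, hc1⟩ := hdom j1 h1
    obtain ⟨u2, hu2, hc2⟩ := hdom j2 h2
    exact ⟨v, hv, two_nb v u1 u2 hu1 hu2 (fun h => h12 (by rw [← hc1, h, hc2]))⟩
  obtain ⟨v0, hcv0, h0⟩ := getv i0 i1 i2 hne01.symm hne02.symm hne12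
  obtain ⟨v1, hcv1, h1⟩ := getv i1 i0 i2 hne01 hne12.symm hne02
  obtain ⟨v2, hcv2, h2⟩ := getv i2 i0 i1 hne02 hne12 hne01
  rcases h0 with rfl | rfl <;> rcases h1 with rfl | rfl <;> rcases h2 with rfl | rfl <;>
    simp_all

/-- In `P3 ∪ K2` (`a-b-c` and `d-e`), no dominating coloring has ≥ 3 colors. -/
lemma bound_P3K2 {a b c d e : W} (hab : H.Adj a b) (hbc : H.Adj b c)
    (hac : ¬H.Adj a c) (hde : H.Adj d e)
    (had : ¬H.Adj a d) (hae : ¬H.Adj a e) (hbd : ¬H.Adj b d) (hbe : ¬H.Adj b e)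
    (hcd : ¬H.Adj c d) (hce : ¬H.Adj c e)
    (hall : ∀ x : W, x = a ∨ x = b ∨ x = c ∨ x = d ∨ x = e)
    {k : ℕ} {c' : W → Fin k} (hd : IsDominatingColoring H c') : k ≤ 2 := by
  by_contra hk
  push_neg at hk
  set i0 : Fin k := ⟨0, by omega⟩ with hi0
  set i1 : Fin k := ⟨1, by omega⟩ with hi1
  set i2 : Fin k := ⟨2, by omega⟩ with hi2
  have hne01 : i0 ≠ i1 := fun h => by simpa [hi0, hi1] using congrArg Fin.val h
  have hne02 : i0 ≠ i2 := fun h => by simpa [hi0, hi2] using congrArg Fin.val h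
  have hne12 : i1 ≠ i2 := fun h => by simpa [hi1, hi2] using congrArg Fin.val h
  have two_nb : ∀ v u1 u2, H.Adj v u1 → H.Adj v u2 → u1 ≠ u2 → v = b := by
    intro v u1 u2 h1 h2 h12
    have nb : ∀ p : W, (∀ u, H.Adj p u → u = b) ∨ (∀ u, H.Adj p u → u = e) ∨
        (∀ u, H.Adj p u → u = d) ∨ p = b := by
      intro p
      rcases hall p with rfl | rfl | rfl | rfl | rfl
      · refine Or.inl fun u hu => ?_
        rcases hall u with rfl | rfl | rfl | rfl | rfl
        · exact absurd hu (H.irrefl)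
        · rfl
        · exact absurd hu hac
        · exact absurd hu had
        · exact absurd hu hae
      · exact Or.inr (Or.inr (Or.inr rfl))
      · refine Or.inl fun u hu => ?_
        rcases hall u with rfl | rfl | rfl | rfl | rfl
        · exact absurd hu.symm hac
        · rfl
        · exact absurd hu (H.irrefl)
        · exact absurd hu hcd
        · exact absurd hu hce
      · refine Or.inr (Or.inl fun u hu => ?_)
        rcases hall u with rfl | rfl | rfl | rfl | rfl
        · exact absurd hu.symm had
        · exact absurd hu.symm hbd
        · exact absurd hu.symm hcd
        · exact absurd hu (H.irrefl)
        · rfl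
      · refine Or.inr (Or.inr (Or.inl fun u hu => ?_))
        rcases hall u with rfl | rfl | rfl | rfl | rfl
        · exact absurd hu.symm hae
        · exact absurd hu.symm hbe
        · exact absurd hu.symm hce
        · rfl
        · exact absurd hu (H.irrefl)
    rcases nb v with hnb | hnb | hnb | rfl
    · exact absurd ((hnb u1 h1).trans (hnb u2 h2).symm) h12
    · exact absurd ((hnb u1 h1).trans (hnb u2 h2).symm) h12
    · exact absurd ((hnb u1 h1).trans (hnb u2 h2).symm) h12
    · rfl
  have getv : ∀ (i j1 j2 : Fin k), j1 ≠ i → j2 ≠ i → j1 ≠ j2 →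
      ∃ v, c' v = i ∧ v = b := by
    intro i j1 j2 h1 h2 h12
    obtain ⟨v, hv, hdom⟩ := hd.2 i
    obtain ⟨u1, hu1, hc1⟩ := hdom j1 h1
    obtain ⟨u2, hu2, hc2⟩ := hdom j2 h2
    exact ⟨v, hv, two_nb v u1 u2 hu1 hu2 (fun h => h12 (by rw [← hc1, h, hc2]))⟩
  obtain ⟨v0, hcv0, rfl⟩ := getv i0 i1 i2 hne01.symm hne02.symm hne12
  obtain ⟨v1, hcv1, h1⟩ := getv i1 i0 i2 hne01 hne12.symm hne02
  subst h1
  exact hne01 (hcv0.symm.trans hcv1)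

/-- In `3K2` (`a-b`, `c-d`, `e-f`), no dominating coloring has ≥ 3 colors. -/
lemma bound_3K2 {a b c d e f : W} (hab : H.Adj a b) (hcd : H.Adj c d) (hef : H.Adj e f)
    (nac : ¬H.Adj a c) (nad : ¬H.Adj a d) (nae : ¬H.Adj a e) (naf : ¬H.Adj a f)
    (nbc : ¬H.Adj b c) (nbd : ¬H.Adj b d) (nbe : ¬H.Adj b e) (nbf : ¬H.Adj b f)
    (nce : ¬H.Adj c e) (ncf : ¬H.Adj c f) (nde : ¬H.Adj d e) (ndf : ¬H.Adj d f)
    (hall : ∀ x : W, x = a ∨ x = b ∨ x = c ∨ x = d ∨ x = e ∨ x = f)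
    {k : ℕ} {c' : W → Fin k} (hd : IsDominatingColoring H c') : k ≤ 2 := by
  by_contra hk
  push_neg at hk
  set i0 : Fin k := ⟨0, by omega⟩ with hi0
  set i1 : Fin k := ⟨1, by omega⟩ with hi1
  set i2 : Fin k := ⟨2, by omega⟩ with hi2
  have hne01 : i0 ≠ i1 := fun h => by simpa [hi0, hi1] using congrArg Fin.val h
  have hne02 : i0 ≠ i2 := fun h => by simpa [hi0, hi2] using congrArg Fin.val h
  have hne12 : i1 ≠ i2 := fun h => by simpa [hi1, hi2] using congrArg Fin.val h
  have uniq : ∀ v u1 u2, H.Adj v u1 → H.Adj v u2 → u1 = u2 := by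
    intro v u1 u2 h1 h2
    have nb : ∃ w : W, ∀ u, H.Adj v u → u = w := by
      rcases hall v with rfl | rfl | rfl | rfl | rfl | rfl
      · refine ⟨b, fun u hu => ?_⟩
        rcases hall u with rfl | rfl | rfl | rfl | rfl | rfl
        · exact absurd hu (H.irrefl)
        · rfl
        · exact absurd hu nac
        · exact absurd hu nad
        · exact absurd hu nae
        · exact absurd hu naf
      · refine ⟨a, fun u hu => ?_⟩
        rcases hall u with rfl | rfl | rfl | rfl | rfl | rfl
        · rfl
        · exact absurd hu (H.irrefl)
        · exact absurd hu nbc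
        · exact absurd hu nbd
        · exact absurd hu nbe
        · exact absurd hu nbf
      · refine ⟨d, fun u hu => ?_⟩
        rcases hall u with rfl | rfl | rfl | rfl | rfl | rfl
        · exact absurd hu.symm nac
        · exact absurd hu.symm nbc
        · exact absurd hu (H.irrefl)
        · rfl
        · exact absurd hu nce
        · exact absurd hu ncf
      · refine ⟨c, fun u hu => ?_⟩
        rcases hall u with rfl | rfl | rfl | rfl | rfl | rfl
        · exact absurd hu.symm nad
        · exact absurd hu.symm nbd
        · rfl
        · exact absurd hu (H.irrefl)
        · exact absurd hu nde
        · exact absurd hu ndf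
      · refine ⟨f, fun u hu => ?_⟩
        rcases hall u with rfl | rfl | rfl | rfl | rfl | rfl
        · exact absurd hu.symm nae
        · exact absurd hu.symm nbe
        · exact absurd hu.symm nce
        · exact absurd hu.symm nde
        · exact absurd hu (H.irrefl)
        · rfl
      · refine ⟨e, fun u hu => ?_⟩
        rcases hall u with rfl | rfl | rfl | rfl | rfl | rfl
        · exact absurd hu.symm naf
        · exact absurd hu.symm nbf
        · exact absurd hu.symm ncf
        · exact absurd hu.symm ndf
        · rfl
        · exact absurd hu (H.irrefl)
    obtain ⟨w, hw⟩ := nb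
    exact (hw u1 h1).trans (hw u2 h2).symm
  obtain ⟨v, hv, hdom⟩ := hd.2 i0
  obtain ⟨u1, hu1, hc1⟩ := hdom i1 hne01.symm
  obtain ⟨u2, hu2, hc2⟩ := hdom i2 hne02.symm
  exact hne12 (by rw [← hc1, uniq v u1 u2 hu1 hu2, hc2])

/-- In `C4 = a-b-c-d-a`, no dominating coloring has ≥ 3 colors. -/
lemma bound_C4 {a b c d : W} (hab : H.Adj a b) (hbc : H.Adj b c) (hcd : H.Adj c d)
    (hda : H.Adj d a) (hac : ¬H.Adj a c) (hbd : ¬H.Adj b d)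
    (hall : ∀ x : W, x = a ∨ x = b ∨ x = c ∨ x = d)
    {k : ℕ} {c' : W → Fin k} (hd : IsDominatingColoring H c') : k ≤ 2 := by
  by_contra hk
  push_neg at hk
  have nbAC : ∀ v u, (v = a ∨ v = c) → H.Adj v u → u = b ∨ u = d := by
    rintro v u (rfl | rfl) hu
    · rcases hall u with rfl | rfl | rfl | rfl
      · exact absurd hu (H.irrefl)
      · exact Or.inl rfl
      · exact absurd hu hac
      · exact Or.inr rfl
    · rcases hall u with rfl | rfl | rfl | rfl
      · exact absurd hu.symm hac
      · exact Or.inl rfl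
      · exact absurd hu (H.irrefl)
      · exact Or.inr rfl
  have nbBD : ∀ v u, (v = b ∨ v = d) → H.Adj v u → u = a ∨ u = c := by
    rintro v u (rfl | rfl) hu
    · rcases hall u with rfl | rfl | rfl | rfl
      · exact Or.inl rfl
      · exact absurd hu (H.irrefl)
      · exact Or.inr rfl
      · exact absurd hu hbd
    · rcases hall u with rfl | rfl | rfl | rfl
      · exact Or.inl rfl
      · exact absurd hu.symm hbd
      · exact Or.inr rfl
      · exact absurd hu (H.irrefl)
  by_cases h4 : 4 ≤ k
  · -- a dominating vertex needs 3 distinct neighbors, impossible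
    set i0 : Fin k := ⟨0, by omega⟩ with hi0
    set i1 : Fin k := ⟨1, by omega⟩ with hi1
    set i2 : Fin k := ⟨2, by omega⟩ with hi2
    set i3 : Fin k := ⟨3, by omega⟩ with hi3
    have hne01 : i0 ≠ i1 := fun h => by simpa [hi0, hi1] using congrArg Fin.val h
    have hne02 : i0 ≠ i2 := fun h => by simpa [hi0, hi2] using congrArg Fin.val h
    have hne03 : i0 ≠ i3 := fun h => by simpa [hi0, hi3] using congrArg Fin.val h
    have hne12 : i1 ≠ i2 := fun h => by simpa [hi1, hi2] using congrArg Fin.val h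
    have hne13 : i1 ≠ i3 := fun h => by simpa [hi1, hi3] using congrArg Fin.val h
    have hne23 : i2 ≠ i3 := fun h => by simpa [hi2, hi3] using congrArg Fin.val h
    obtain ⟨v, hv, hdom⟩ := hd.2 i0
    obtain ⟨u1, hu1, hc1⟩ := hdom i1 hne01.symm
    obtain ⟨u2, hu2, hc2⟩ := hdom i2 hne02.symm
    obtain ⟨u3, hu3, hc3⟩ := hdom i3 hne03.symm
    have hvclass : (v = a ∨ v = c) ∨ (v = b ∨ v = d) := by
      rcases hall v with rfl | rfl | rfl | rfl <;> tauto
    rcases hvclass with hv' | hv'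
    · rcases nbAC v u1 hv' hu1 with rfl | rfl <;>
        rcases nbAC v u2 hv' hu2 with h2' | h2' <;>
        rcases nbAC v u3 hv' hu3 with h3' | h3' <;> subst h2' <;> subst h3' <;>
        first
          | exact hne12 (hc1.symm.trans hc2)
          | exact hne13 (hc1.symm.trans hc3)
          | exact hne23 (hc2.symm.trans hc3)
    · rcases nbBD v u1 hv' hu1 with rfl | rfl <;>
        rcases nbBD v u2 hv' hu2 with h2' | h2' <;>
        rcases nbBD v u3 hv' hu3 with h3' | h3' <;> subst h2' <;> subst h3' <;>
        first
          | exact hne12 (hc1.symm.trans hc2)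
          | exact hne13 (hc1.symm.trans hc3)
          | exact hne23 (hc2.symm.trans hc3)
  · -- k = 3 : opposite-pair argument
    have hk3 : k = 3 := by omega
    subst hk3
    have third : ∀ i j : Fin 3, i ≠ j → ∃ l : Fin 3, l ≠ i ∧ l ≠ j := by decide
    -- dominance data for each color
    have pairAC : ∀ (i j : Fin 3) (vi vj : W), i ≠ j → (vi = a ∨ vi = c) → (vj = a ∨ vj = c) →
        c' vi = i → c' vj = j →
        (∀ m, m ≠ i → ∃ u, H.Adj vi u ∧ c' u = m) →
        (∀ m, m ≠ j → ∃ u, H.Adj vj u ∧ c' u = m) → False := by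
      intro i j vi vj hij hvi hvj hci hcj hdi hdj
      obtain ⟨l, hli, hlj⟩ := third i j hij
      obtain ⟨uj, huj, hcuj⟩ := hdi j (Ne.symm hij)
      obtain ⟨ul, hul, hcul⟩ := hdi l hli
      obtain ⟨ui, hui, hcui⟩ := hdj i hij
      rcases nbAC vi uj hvi huj with rfl | rfl <;>
        rcases nbAC vi ul hvi hul with h1 | h1 <;>
        rcases nbAC vj ui hvj hui with h2 | h2 <;> subst h1 <;> subst h2 <;>
        first
          | exact hlj (hcul.symm.trans hcuj)
          | exact hij (hcui.symm.trans hcuj)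
          | exact hli (hcul.symm.trans hcui)
    have pairBD : ∀ (i j : Fin 3) (vi vj : W), i ≠ j → (vi = b ∨ vi = d) → (vj = b ∨ vj = d) →
        c' vi = i → c' vj = j →
        (∀ m, m ≠ i → ∃ u, H.Adj vi u ∧ c' u = m) →
        (∀ m, m ≠ j → ∃ u, H.Adj vj u ∧ c' u = m) → False := by
      intro i j vi vj hij hvi hvj hci hcj hdi hdj
      obtain ⟨l, hli, hlj⟩ := third i j hij
      obtain ⟨uj, huj, hcuj⟩ := hdi j (Ne.symm hij)
      obtain ⟨ul, hul, hcul⟩ := hdi l hli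
      obtain ⟨ui, hui, hcui⟩ := hdj i hij
      rcases nbBD vi uj hvi huj with rfl | rfl <;>
        rcases nbBD vi ul hvi hul with h1 | h1 <;>
        rcases nbBD vj ui hvj hui with h2 | h2 <;> subst h1 <;> subst h2 <;>
        first
          | exact hlj (hcul.symm.trans hcuj)
          | exact hij (hcui.symm.trans hcuj)
          | exact hli (hcul.symm.trans hcui)
    obtain ⟨v0, hcv0, hdom0⟩ := hd.2 0
    obtain ⟨v1, hcv1, hdom1⟩ := hd.2 1
    obtain ⟨v2, hcv2, hdom2⟩ := hd.2 2
    have h0 : (v0 = a ∨ v0 = c) ∨ (v0 = b ∨ v0 = d) := by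
      rcases hall v0 with rfl | rfl | rfl | rfl <;> tauto
    have h1 : (v1 = a ∨ v1 = c) ∨ (v1 = b ∨ v1 = d) := by
      rcases hall v1 with rfl | rfl | rfl | rfl <;> tauto
    have h2 : (v2 = a ∨ v2 = c) ∨ (v2 = b ∨ v2 = d) := by
      rcases hall v2 with rfl | rfl | rfl | rfl <;> tauto
    have ne01 : (0 : Fin 3) ≠ 1 := by decide
    have ne02 : (0 : Fin 3) ≠ 2 := by decide
    have ne12 : (1 : Fin 3) ≠ 2 := by decide
    rcases h0 with h0 | h0 <;> rcases h1 with h1 | h1 <;> rcases h2 with h2 | h2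
    · exact pairAC 0 1 v0 v1 ne01 h0 h1 hcv0 hcv1 hdom0 hdom1
    · exact pairAC 0 1 v0 v1 ne01 h0 h1 hcv0 hcv1 hdom0 hdom1
    · exact pairAC 0 2 v0 v2 ne02 h0 h2 hcv0 hcv2 hdom0 hdom2
    · exact pairBD 1 2 v1 v2 ne12 h1 h2 hcv1 hcv2 hdom1 hdom2
    · exact pairAC 1 2 v1 v2 ne12 h1 h2 hcv1 hcv2 hdom1 hdom2
    · exact pairBD 0 2 v0 v2 ne02 h0 h2 hcv0 hcv2 hdom0 hdom2
    · exact pairBD 0 1 v0 v1 ne01 h0 h1 hcv0 hcv1 hdom0 hdom1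
    · exact pairBD 0 1 v0 v1 ne01 h0 h1 hcv0 hcv1 hdom0 hdom1

lemma psi3_P4 {a b c d : W} (hab : H.Adj a b) (hbc : H.Adj b c) (hcd : H.Adj c d)
    (hnac : a ≠ c) (hnad : a ≠ d) (hnbd : b ≠ d) :
    ∃ c' : W → Fin 3, IsCompleteColoring H c' := by
  classical
  have hba : b ≠ a := hab.ne'
  have hcb : c ≠ b := hbc.ne'
  have hca : c ≠ a := hnac.symm
  have hda : d ≠ a := hnad.symm
  have hdb : d ≠ b := hnbd.symm
  have hdc : d ≠ c := hcd.ne'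
  refine ⟨fun x => if x = a then 2 else if x = b then 0 else if x = c then 1 else 2, ?_, ?_⟩
  · intro i
    fin_cases i
    · exact ⟨b, by simp [hba]⟩
    · exact ⟨c, by simp [hca, hcb]⟩
    · exact ⟨a, by simp⟩
  · intro i j hij
    have ea : (if a = a then (2:Fin 3) else if a = b then 0 else if a = c then 1 else 2) = 2 := by simp
    have eb : (if b = a then (2:Fin 3) else if b = b then 0 else if b = c then 1 else 2) = 0 := by simp [hba]
    have ec : (if c = a then (2:Fin 3) else if c = b then 0 else if c = c then 1 else 2) = 1 := by simp [hca, hcb]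
    have ed : (if d = a then (2:Fin 3) else if d = b then 0 else if d = c then 1 else 2) = 2 := by simp [hda, hdb, hdc]
    fin_cases i <;> fin_cases j <;> simp only [] at hij ⊢
    · exact absurd rfl hij
    · exact ⟨b, c, hbc, eb, ec⟩
    · exact ⟨b, a, hab.symm, eb, ea⟩
    · exact ⟨c, b, hbc.symm, ec, eb⟩
    · exact absurd rfl hij
    · exact ⟨c, d, hcd, ec, ed⟩
    · exact ⟨a, b, hab, ea, eb⟩
    · exact ⟨d, c, hcd.symm, ed, ec⟩
    · exact absurd rfl hij

lemma psi3_C4 {a b c d : W} (hab : H.Adj a b) (hbc : H.Adj b c) (hcd : H.Adj c d)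
    (hda : H.Adj d a) (hnac : a ≠ c) (hnbd : b ≠ d) :
    ∃ c' : W → Fin 3, IsCompleteColoring H c' := by
  classical
  have hba : b ≠ a := hab.ne'
  have hcb : c ≠ b := hbc.ne'
  have hca : c ≠ a := hnac.symm
  have hda' : d ≠ a := hda.ne
  have hdb : d ≠ b := hnbd.symm
  have hdc : d ≠ c := hcd.ne'
  refine ⟨fun x => if x = a then 0 else if x = b then 1 else if x = c then 2 else 0, ?_, ?_⟩
  · intro i
    fin_cases i
    · exact ⟨a, by simp⟩
    · exact ⟨b, by simp [hba]⟩
    · exact ⟨c, by simp [hca, hcb]⟩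
  · intro i j hij
    have ea : (if a = a then (0:Fin 3) else if a = b then 1 else if a = c then 2 else 0) = 0 := by simp
    have eb : (if b = a then (0:Fin 3) else if b = b then 1 else if b = c then 2 else 0) = 1 := by simp [hba]
    have ec : (if c = a then (0:Fin 3) else if c = b then 1 else if c = c then 2 else 0) = 2 := by simp [hca, hcb]
    have ed : (if d = a then (0:Fin 3) else if d = b then 1 else if d = c then 2 else 0) = 0 := by simp [hda', hdb, hdc]
    fin_cases i <;> fin_cases j <;> simp only [] at hij ⊢
    · exact absurd rfl hij
    · exact ⟨a, b, hab, ea, eb⟩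
    · exact ⟨d, c, hcd.symm, ed, ec⟩
    · exact ⟨b, a, hab.symm, eb, ea⟩
    · exact absurd rfl hij
    · exact ⟨b, c, hbc, eb, ec⟩
    · exact ⟨c, d, hcd, ec, ed⟩
    · exact ⟨c, b, hbc.symm, ec, eb⟩
    · exact absurd rfl hij

lemma psi3_P3K2 {a b c d e : W} (hab : H.Adj a b) (hbc : H.Adj b c) (hde : H.Adj d e)
    (hnac : a ≠ c) (hnad : a ≠ d) (hnae : a ≠ e) (hnbd : b ≠ d) (hnbe : b ≠ e)
    (hncd : c ≠ d) (hnce : c ≠ e) :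
    ∃ c' : W → Fin 3, IsCompleteColoring H c' := by
  classical
  have hba : b ≠ a := hab.ne'
  have hca : c ≠ a := hnac.symm
  have hcb : c ≠ b := hbc.ne'
  have hda : d ≠ a := hnad.symm
  have hdb : d ≠ b := hnbd.symm
  have hdc : d ≠ c := hncd.symm
  have hea : e ≠ a := hnae.symm
  have heb : e ≠ b := hnbe.symm
  have hec : e ≠ c := hnce.symm
  have hed : e ≠ d := hde.ne'
  refine ⟨fun x => if x = a then 1 else if x = b then 0 else if x = c then 2
    else if x = d then 1 else if x = e then 2 else 0, ?_, ?_⟩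
  · intro i
    fin_cases i
    · exact ⟨b, by simp [hba]⟩
    · exact ⟨a, by simp⟩
    · exact ⟨c, by simp [hca, hcb]⟩
  · intro i j hij
    have ea : (if a = a then (1:Fin 3) else if a = b then 0 else if a = c then 2
      else if a = d then 1 else if a = e then 2 else 0) = 1 := by simp
    have eb : (if b = a then (1:Fin 3) else if b = b then 0 else if b = c then 2
      else if b = d then 1 else if b = e then 2 else 0) = 0 := by simp [hba]
    have ec : (if c = a then (1:Fin 3) else if c = b then 0 else if c = c then 2
      else if c = d then 1 else if c = e then 2 else 0) = 2 := by simp [hca, hcb]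
    have ed : (if d = a then (1:Fin 3) else if d = b then 0 else if d = c then 2
      else if d = d then 1 else if d = e then 2 else 0) = 1 := by simp [hda, hdb, hdc]
    have ee : (if e = a then (1:Fin 3) else if e = b then 0 else if e = c then 2
      else if e = d then 1 else if e = e then 2 else 0) = 2 := by simp [hea, heb, hec, hed]
    fin_cases i <;> fin_cases j <;> simp only [] at hij ⊢
    · exact absurd rfl hij
    · exact ⟨b, a, hab.symm, eb, ea⟩
    · exact ⟨b, c, hbc, eb, ec⟩
    · exact ⟨a, b, hab, ea, eb⟩
    · exact absurd rfl hij
    · exact ⟨d, e, hde, ed, ee⟩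
    · exact ⟨c, b, hbc.symm, ec, eb⟩
    · exact ⟨e, d, hde.symm, ee, ed⟩
    · exact absurd rfl hij

lemma psi3_3K2 {a b c d e f : W} (hab : H.Adj a b) (hcd : H.Adj c d) (hef : H.Adj e f)
    (hnac : a ≠ c) (hnad : a ≠ d) (hnae : a ≠ e) (hnaf : a ≠ f)
    (hnbc : b ≠ c) (hnbd : b ≠ d) (hnbe : b ≠ e) (hnbf : b ≠ f)
    (hnce : c ≠ e) (hncf : c ≠ f) (hnde : d ≠ e) (hndf : d ≠ f) :
    ∃ c' : W → Fin 3, IsCompleteColoring H c' := by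
  classical
  have hba : b ≠ a := hab.ne'
  have hca : c ≠ a := hnac.symm
  have hcb : c ≠ b := hnbc.symm
  have hda : d ≠ a := hnad.symm
  have hdb : d ≠ b := hnbd.symm
  have hdc : d ≠ c := hcd.ne'
  have hea : e ≠ a := hnae.symm
  have heb : e ≠ b := hnbe.symm
  have hec : e ≠ c := hnce.symm
  have hed : e ≠ d := hnde.symm
  have hfa : f ≠ a := hnaf.symm
  have hfb : f ≠ b := hnbf.symm
  have hfc : f ≠ c := hncf.symm
  have hfd : f ≠ d := hndf.symm
  have hfe : f ≠ e := hef.ne'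
  refine ⟨fun x => if x = a then 0 else if x = b then 1 else if x = c then 0
    else if x = d then 2 else if x = e then 1 else 2, ?_, ?_⟩
  · intro i
    fin_cases i
    · exact ⟨a, by simp⟩
    · exact ⟨b, by simp [hba]⟩
    · exact ⟨d, by simp [hda, hdb, hdc]⟩
  · intro i j hij
    have ea : (if a = a then (0:Fin 3) else if a = b then 1 else if a = c then 0
      else if a = d then 2 else if a = e then 1 else 2) = 0 := by simp
    have eb : (if b = a then (0:Fin 3) else if b = b then 1 else if b = c then 0
      else if b = d then 2 else if b = e then 1 else 2) = 1 := by simp [hba]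
    have ec : (if c = a then (0:Fin 3) else if c = b then 1 else if c = c then 0
      else if c = d then 2 else if c = e then 1 else 2) = 0 := by simp [hca, hcb]
    have ed : (if d = a then (0:Fin 3) else if d = b then 1 else if d = c then 0
      else if d = d then 2 else if d = e then 1 else 2) = 2 := by simp [hda, hdb, hdc]
    have ee : (if e = a then (0:Fin 3) else if e = b then 1 else if e = c then 0
      else if e = d then 2 else if e = e then 1 else 2) = 1 := by simp [hea, heb, hec, hed]
    have ef' : (if f = a then (0:Fin 3) else if f = b then 1 else if f = c then 0
      else if f = d then 2 else if f = e then 1 else 2) = 2 := by simp [hfa, hfb, hfc, hfd, hfe]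
    fin_cases i <;> fin_cases j <;> simp only [] at hij ⊢
    · exact absurd rfl hij
    · exact ⟨a, b, hab, ea, eb⟩
    · exact ⟨c, d, hcd, ec, ed⟩
    · exact ⟨b, a, hab.symm, eb, ea⟩
    · exact absurd rfl hij
    · exact ⟨e, f, hef, ee, ef'⟩
    · exact ⟨d, c, hcd.symm, ed, ec⟩
    · exact ⟨f, e, hef.symm, ef', ee⟩
    · exact absurd rfl hij

/-! ### Glue -/

lemma dominating_mem_complete {G : SimpleGraph V} {k : ℕ}
    (h : k ∈ {k | ∃ c : V → Fin k, IsDominatingColoring G c}) :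
    k ∈ {k | ∃ c : V → Fin k, IsCompleteColoring G c} := by
  obtain ⟨c, hc⟩ := h
  exact ⟨c, dominating_complete hc⟩

lemma nonempty_sets [Fintype V] (G : SimpleGraph V) :
    {k | ∃ c : V → Fin k, IsProperColoring G c ∧ IsDominatingColoring G c}.Nonempty ∧
    {k | ∃ c : V → Fin k, IsDominatingColoring G c}.Nonempty ∧
    {k | ∃ c : V → Fin k, IsCompleteColoring G c}.Nonempty := by
  obtain ⟨m, c, hp, hdm, -⟩ := exists_proper_dominating G
  exact ⟨⟨m, c, hp, hdm⟩, ⟨m, c, hdm⟩, ⟨m, c, dominating_complete hdm⟩⟩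

/-- From the `Bψ`-perfection hypothesis, `G` is F-free. -/
lemma ffree_of_hyp [Fintype V] (G : SimpleGraph V)
    (hyp : ∀ s : Set V,
      pseudoBChromaticNumber (G.induce s) = pseudoachromaticNumber (G.induce s)) :
    Ffree G := by
  classical
  have main : ∀ (s : Set V), (∃ c3 : ↥s → Fin 3, IsCompleteColoring (G.induce s) c3) →
      (∀ k (ck : ↥s → Fin k), IsDominatingColoring (G.induce s) ck → k ≤ 2) → False := by
    intro s hpsi hbound
    haveI : Fintype ↥s := (Set.toFinite s).fintype
    have h3 : 3 ≤ pseudoachromaticNumber (G.induce s) :=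
      le_csSup (bdd_complete (G.induce s)) hpsi
    have hB : pseudoBChromaticNumber (G.induce s) ≤ 2 := by
      apply csSup_le (nonempty_sets (G.induce s)).2.1
      rintro k ⟨ck, hck⟩
      exact hbound k ck hck
    rw [hyp s] at hB
    omega
  refine ⟨?_, ?_, ?_, ?_⟩
  · intro a b c d hab hbc hcd hac had hbd hnac hnad hnbd
    set s : Set V := {a, b, c, d} with hs
    have ma : a ∈ s := by simp [hs]
    have mb : b ∈ s := by simp [hs]
    have mc : c ∈ s := by simp [hs]
    have md : d ∈ s := by simp [hs]
    have hall : ∀ x : ↥s, x = ⟨a, ma⟩ ∨ x = ⟨b, mb⟩ ∨ x = ⟨c, mc⟩ ∨ x = ⟨d, md⟩ := by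
      intro x
      have hx := x.2
      simp only [hs, Set.mem_insert_iff, Set.mem_singleton_iff] at hx
      rcases hx with h | h | h | h
      · exact Or.inl (Subtype.ext h)
      · exact Or.inr (Or.inl (Subtype.ext h))
      · exact Or.inr (Or.inr (Or.inl (Subtype.ext h)))
      · exact Or.inr (Or.inr (Or.inr (Subtype.ext h)))
    refine main s ?_ ?_
    · exact psi3_P4 (a := (⟨a, ma⟩ : ↥s)) (b := ⟨b, mb⟩) (c := ⟨c, mc⟩) (d := ⟨d, md⟩)
        (induce_adj'.2 hab) (induce_adj'.2 hbc) (induce_adj'.2 hcd)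
        (fun h => hnac (congrArg Subtype.val h)) (fun h => hnad (congrArg Subtype.val h))
        (fun h => hnbd (congrArg Subtype.val h))
    · intro k ck hck
      exact bound_P4 (a := (⟨a, ma⟩ : ↥s)) (b := ⟨b, mb⟩) (c := ⟨c, mc⟩) (d := ⟨d, md⟩)
        (induce_adj'.2 hab) (induce_adj'.2 hbc) (induce_adj'.2 hcd)
        (fun h => hac (induce_adj'.1 h)) (fun h => had (induce_adj'.1 h))
        (fun h => hbd (induce_adj'.1 h)) hall hck
  · intro a b c d hab hbc hcd hda hac hbd hnac hnbd
    set s : Set V := {a, b, c, d} with hs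
    have ma : a ∈ s := by simp [hs]
    have mb : b ∈ s := by simp [hs]
    have mc : c ∈ s := by simp [hs]
    have md : d ∈ s := by simp [hs]
    have hall : ∀ x : ↥s, x = ⟨a, ma⟩ ∨ x = ⟨b, mb⟩ ∨ x = ⟨c, mc⟩ ∨ x = ⟨d, md⟩ := by
      intro x
      have hx := x.2
      simp only [hs, Set.mem_insert_iff, Set.mem_singleton_iff] at hx
      rcases hx with h | h | h | h
      · exact Or.inl (Subtype.ext h)
      · exact Or.inr (Or.inl (Subtype.ext h))
      · exact Or.inr (Or.inr (Or.inl (Subtype.ext h)))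
      · exact Or.inr (Or.inr (Or.inr (Subtype.ext h)))
    refine main s ?_ ?_
    · exact psi3_C4 (a := (⟨a, ma⟩ : ↥s)) (b := ⟨b, mb⟩) (c := ⟨c, mc⟩) (d := ⟨d, md⟩)
        (induce_adj'.2 hab) (induce_adj'.2 hbc) (induce_adj'.2 hcd) (induce_adj'.2 hda)
        (fun h => hnac (congrArg Subtype.val h)) (fun h => hnbd (congrArg Subtype.val h))
    · intro k ck hck
      exact bound_C4 (a := (⟨a, ma⟩ : ↥s)) (b := ⟨b, mb⟩) (c := ⟨c, mc⟩) (d := ⟨d, md⟩)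
        (induce_adj'.2 hab) (induce_adj'.2 hbc) (induce_adj'.2 hcd) (induce_adj'.2 hda)
        (fun h => hac (induce_adj'.1 h)) (fun h => hbd (induce_adj'.1 h)) hall hck
  · intro a b c d e hab hbc hac hnac hde had hae hbd hbe hcd hce
    set s : Set V := {a, b, c, d, e} with hs
    have ma : a ∈ s := by simp [hs]
    have mb : b ∈ s := by simp [hs]
    have mc : c ∈ s := by simp [hs]
    have md : d ∈ s := by simp [hs]
    have me : e ∈ s := by simp [hs]
    have hall : ∀ x : ↥s, x = ⟨a, ma⟩ ∨ x = ⟨b, mb⟩ ∨ x = ⟨c, mc⟩ ∨ x = ⟨d, md⟩ ∨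
        x = ⟨e, me⟩ := by
      intro x
      have hx := x.2
      simp only [hs, Set.mem_insert_iff, Set.mem_singleton_iff] at hx
      rcases hx with h | h | h | h | h
      · exact Or.inl (Subtype.ext h)
      · exact Or.inr (Or.inl (Subtype.ext h))
      · exact Or.inr (Or.inr (Or.inl (Subtype.ext h)))
      · exact Or.inr (Or.inr (Or.inr (Or.inl (Subtype.ext h))))
      · exact Or.inr (Or.inr (Or.inr (Or.inr (Subtype.ext h))))
    -- derived distinctness
    have hnad : a ≠ d := fun h => hae (h ▸ hde)
    have hnae : a ≠ e := fun h => had (h ▸ hde.symm)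
    have hnbd : b ≠ d := fun h => hbe (h ▸ hde)
    have hnbe : b ≠ e := fun h => hbd (h ▸ hde.symm)
    have hncd : c ≠ d := fun h => hce (h ▸ hde)
    have hnce : c ≠ e := fun h => hcd (h ▸ hde.symm)
    refine main s ?_ ?_
    · exact psi3_P3K2 (a := (⟨a, ma⟩ : ↥s)) (b := ⟨b, mb⟩) (c := ⟨c, mc⟩) (d := ⟨d, md⟩)
        (e := ⟨e, me⟩) (induce_adj'.2 hab) (induce_adj'.2 hbc) (induce_adj'.2 hde)
        (fun h => hnac (congrArg Subtype.val h)) (fun h => hnad (congrArg Subtype.val h))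
        (fun h => hnae (congrArg Subtype.val h)) (fun h => hnbd (congrArg Subtype.val h))
        (fun h => hnbe (congrArg Subtype.val h)) (fun h => hncd (congrArg Subtype.val h))
        (fun h => hnce (congrArg Subtype.val h))
    · intro k ck hck
      exact bound_P3K2 (a := (⟨a, ma⟩ : ↥s)) (b := ⟨b, mb⟩) (c := ⟨c, mc⟩) (d := ⟨d, md⟩)
        (e := ⟨e, me⟩) (induce_adj'.2 hab) (induce_adj'.2 hbc)
        (fun h => hac (induce_adj'.1 h)) (induce_adj'.2 hde)
        (fun h => had (induce_adj'.1 h)) (fun h => hae (induce_adj'.1 h))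
        (fun h => hbd (induce_adj'.1 h)) (fun h => hbe (induce_adj'.1 h))
        (fun h => hcd (induce_adj'.1 h)) (fun h => hce (induce_adj'.1 h)) hall hck
  · intro a b c d e f hab hcd hef nac nad nae naf nbc nbd nbe nbf nce ncf nde ndf
    set s : Set V := {a, b, c, d, e, f} with hs
    have ma : a ∈ s := by simp [hs]
    have mb : b ∈ s := by simp [hs]
    have mc : c ∈ s := by simp [hs]
    have md : d ∈ s := by simp [hs]
    have me : e ∈ s := by simp [hs]
    have mf : f ∈ s := by simp [hs]
    have hall : ∀ x : ↥s, x = ⟨a, ma⟩ ∨ x = ⟨b, mb⟩ ∨ x = ⟨c, mc⟩ ∨ x = ⟨d, md⟩ ∨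
        x = ⟨e, me⟩ ∨ x = ⟨f, mf⟩ := by
      intro x
      have hx := x.2
      simp only [hs, Set.mem_insert_iff, Set.mem_singleton_iff] at hx
      rcases hx with h | h | h | h | h | h
      · exact Or.inl (Subtype.ext h)
      · exact Or.inr (Or.inl (Subtype.ext h))
      · exact Or.inr (Or.inr (Or.inl (Subtype.ext h)))
      · exact Or.inr (Or.inr (Or.inr (Or.inl (Subtype.ext h))))
      · exact Or.inr (Or.inr (Or.inr (Or.inr (Or.inl (Subtype.ext h)))))
      · exact Or.inr (Or.inr (Or.inr (Or.inr (Or.inr (Subtype.ext h)))))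
    have hnac : a ≠ c := fun h => nad (h ▸ hcd)
    have hnad : a ≠ d := fun h => nac (h ▸ hcd.symm)
    have hnae : a ≠ e := fun h => naf (h ▸ hef)
    have hnaf : a ≠ f := fun h => nae (h ▸ hef.symm)
    have hnbc : b ≠ c := fun h => nbd (h ▸ hcd)
    have hnbd : b ≠ d := fun h => nbc (h ▸ hcd.symm)
    have hnbe : b ≠ e := fun h => nbf (h ▸ hef)
    have hnbf : b ≠ f := fun h => nbe (h ▸ hef.symm)
    have hnce : c ≠ e := fun h => ncf (h ▸ hef)
    have hncf : c ≠ f := fun h => nce (h ▸ hef.symm)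
    have hnde : d ≠ e := fun h => ndf (h ▸ hef)
    have hndf : d ≠ f := fun h => nde (h ▸ hef.symm)
    refine main s ?_ ?_
    · exact psi3_3K2 (a := (⟨a, ma⟩ : ↥s)) (b := ⟨b, mb⟩) (c := ⟨c, mc⟩) (d := ⟨d, md⟩)
        (e := ⟨e, me⟩) (f := ⟨f, mf⟩)
        (induce_adj'.2 hab) (induce_adj'.2 hcd) (induce_adj'.2 hef)
        (fun h => hnac (congrArg Subtype.val h)) (fun h => hnad (congrArg Subtype.val h))
        (fun h => hnae (congrArg Subtype.val h)) (fun h => hnaf (congrArg Subtype.val h))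
        (fun h => hnbc (congrArg Subtype.val h)) (fun h => hnbd (congrArg Subtype.val h))
        (fun h => hnbe (congrArg Subtype.val h)) (fun h => hnbf (congrArg Subtype.val h))
        (fun h => hnce (congrArg Subtype.val h)) (fun h => hncf (congrArg Subtype.val h))
        (fun h => hnde (congrArg Subtype.val h)) (fun h => hndf (congrArg Subtype.val h))
    · intro k ck hck
      exact bound_3K2 (a := (⟨a, ma⟩ : ↥s)) (b := ⟨b, mb⟩) (c := ⟨c, mc⟩) (d := ⟨d, md⟩)
        (e := ⟨e, me⟩) (f := ⟨f, mf⟩)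
        (induce_adj'.2 hab) (induce_adj'.2 hcd) (induce_adj'.2 hef)
        (fun h => nac (induce_adj'.1 h)) (fun h => nad (induce_adj'.1 h))
        (fun h => nae (induce_adj'.1 h)) (fun h => naf (induce_adj'.1 h))
        (fun h => nbc (induce_adj'.1 h)) (fun h => nbd (induce_adj'.1 h))
        (fun h => nbe (induce_adj'.1 h)) (fun h => nbf (induce_adj'.1 h))
        (fun h => nce (induce_adj'.1 h)) (fun h => ncf (induce_adj'.1 h))
        (fun h => nde (induce_adj'.1 h)) (fun h => ndf (induce_adj'.1 h)) hall hck

end BPsiAux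

open BPsiAux in
/-- `G` is bψ-perfect iff `G` is Bψ-perfect. -/
theorem b_pseudoachromatic_perfect_iff_pseudoB_pseudoachromatic_perfect
    {V : Type*} [Fintype V] (G : SimpleGraph V) :
    (∀ s : Set V, bChromaticNumber (G.induce s) = pseudoachromaticNumber (G.induce s)) ↔
      (∀ s : Set V,
        pseudoBChromaticNumber (G.induce s) = pseudoachromaticNumber (G.induce s)) := by
  classical
  constructor
  · intro h s
    haveI : Fintype ↥s := (Set.toFinite s).fintype
    refine le_antisymm ?_ ?_
    · exact csSup_le_csSup (bdd_complete (G.induce s)) (nonempty_sets (G.induce s)).2.1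
        (fun k hk => dominating_mem_complete hk)
    · rw [← h s]
      exact csSup_le_csSup (bdd_dominating (G.induce s)) (nonempty_sets (G.induce s)).1
        (fun k hk => ⟨hk.choose, hk.choose_spec.2⟩)
  · intro h s
    haveI : Fintype ↥s := (Set.toFinite s).fintype
    have hF : Ffree G := ffree_of_hyp G h
    have hFs : Ffree (G.induce s) := ffree_induce hF s
    refine le_antisymm ?_ ?_
    · exact csSup_le_csSup (bdd_complete (G.induce s)) (nonempty_sets (G.induce s)).1
        (fun k hk => dominating_mem_complete ⟨hk.choose, hk.choose_spec.2⟩)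
    · -- ψ ≤ b
      have hmem : pseudoachromaticNumber (G.induce s) ∈
          {k | ∃ c : ↥s → Fin k, IsCompleteColoring (G.induce s) c} :=
        Nat.sSup_mem (nonempty_sets (G.induce s)).2.2 (bdd_complete (G.induce s))
      obtain ⟨c, hc⟩ := hmem
      obtain ⟨f, hfinj, hfadj⟩ := key (Fintype.card ↥s) (G.induce s) le_rfl hFs c hc
      obtain ⟨m, cm, hp, hdm, hcl⟩ := exists_proper_dominating (G.induce s)
      have hkm : pseudoachromaticNumber (G.induce s) ≤ m := hcl _ f hfinj hfadj
      have hmb : m ≤ bChromaticNumber (G.induce s) :=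
        le_csSup (bdd_proper_dominating (G.induce s)) ⟨cm, hp, hdm⟩
      omega
end
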